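/- arXiv:1612.06332 — 3 statements merged into one kernel-verified Lean document; each statement's English description precedes it below -/
import Mathlib

section
/- Every polytope X is equal to the intersection of its tangent cones at vertices: X = ⋂_{v ∈ vert(X)} C_v(X), where C_v(X) = v + cone{x - v : x adjacent vertex of v}. -/
open Set Finset

/-- A polytope: convex hull of finitely many points. -/
def IsPolytope {n : ℕ} (X : Set (Fin n → ℝ)) : Prop :=
  ∃ V : Finset (Fin n → ℝ), X = convexHull ℝ (V : Set (Fin n → ℝ))

/-- Affine dimension of a set. -/
noncomputable def adim {n : ℕ} (S : Set (Fin n → ℝ)) : ℕ :=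
  Module.finrank ℝ (vectorSpan ℝ S)

/-- `F` is a facet of `X`: an exposed face of affine dimension one less than `X`. -/
def IsFacet {n : ℕ} (X F : Set (Fin n → ℝ)) : Prop :=
  IsExposed ℝ X F ∧ adim F + 1 = adim X

/-- Two vertices of `X` are adjacent if the segment joining them is an exposed face. -/
def AdjVert {n : ℕ} (X : Set (Fin n → ℝ)) (u v : Fin n → ℝ) : Prop :=
  u ≠ v ∧ u ∈ X.extremePoints ℝ ∧ v ∈ X.extremePoints ℝ ∧
    IsExposed ℝ X (segment ℝ u v)

/-- The convex cone generated by a set: all nonnegative multiples of convex combinations. -/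
def coneHull {n : ℕ} (S : Set (Fin n → ℝ)) : Set (Fin n → ℝ) :=
  {0} ∪ {p | ∃ c : ℝ, 0 ≤ c ∧ ∃ z ∈ convexHull ℝ S, p = c • z}

/-- The tangent cone of `X` at a vertex `v`:
`v + cone{x - v : x an adjacent vertex of v}`. -/
def tangentCone {n : ℕ} (X : Set (Fin n → ℝ)) (v : Fin n → ℝ) : Set (Fin n → ℝ) :=
  {p | ∃ y ∈ coneHull {z | ∃ x, AdjVert X v x ∧ z = x - v}, p = v + y}

/-- The graph (1-skeleton) of a polytope `X`, with the vertices of `X` as nodes. -/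
def polyGraph {n : ℕ} (X : Set (Fin n → ℝ)) : SimpleGraph (Fin n → ℝ) where
  Adj := AdjVert X
  symm := by
    constructor
    intro u v h
    refine ⟨h.1.symm, h.2.2.1, h.2.1, ?_⟩
    rw [segment_symm]; exact h.2.2.2
  loopless := by constructor; intro u h; exact h.1 rfl

/-- Real point corresponding to an integer point. -/
def toR {d : ℕ} (x : Fin d → ℤ) : Fin d → ℝ := fun i => (x i : ℝ)

/-- Lexicographic order comparing from the last coordinate. -/
def lexLe {d : ℕ} (x y : Fin d → ℤ) : Prop :=
  x = y ∨ ∃ i : Fin d, x i < y i ∧ ∀ k : Fin d, i < k → x k = y k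

/-- Graded lexicographic order. -/
def grlexLe {d : ℕ} (x y : Fin d → ℤ) : Prop :=
  (∑ i, x i) < (∑ i, y i) ∨ ((∑ i, x i) = (∑ i, y i) ∧ lexLe x y)

/-- Graded reverse lexicographic order. -/
def grevlexLe {d : ℕ} (x y : Fin d → ℤ) : Prop :=
  (∑ i, x i) < (∑ i, y i) ∨ ((∑ i, x i) = (∑ i, y i) ∧ lexLe y x)

/-- The grlex polytope `P = conv{x ∈ ℤᵈ : 0 ≤ x ≼_grlex θ}`. -/
def grlexP (d : ℕ) (θ : Fin d → ℤ) : Set (Fin d → ℝ) :=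
  convexHull ℝ {p | ∃ x : Fin d → ℤ, (∀ i, 0 ≤ x i) ∧ grlexLe x θ ∧ p = toR x}

/-- The grevlex polytope `Q = conv{x ∈ ℤᵈ : 0 ≤ x ≼_grevlex θ}`. -/
def grevlexQ (d : ℕ) (θ : Fin d → ℤ) : Set (Fin d → ℝ) :=
  convexHull ℝ {p | ∃ x : Fin d → ℤ, (∀ i, 0 ≤ x i) ∧ grevlexLe x θ ∧ p = toR x}

/-- `b`, the total sum of `θ`. -/
def bsum {d : ℕ} (θ : Fin d → ℤ) : ℤ := ∑ i, θ i

/-- `b̃ₖ`, the sum of the first `k` coordinates of `θ` (`k` is 1-indexed). -/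
def btil {d : ℕ} (θ : Fin d → ℤ) (k : ℕ) : ℤ :=
  ∑ i ∈ Finset.univ.filter (fun i : Fin d => (i : ℕ) < k), θ i

/-- The vertex `w = (b-1)e_d` of `P`. -/
def wP (d : ℕ) (θ : Fin d → ℤ) : Fin d → ℤ :=
  fun i => if (i : ℕ) = d - 1 then bsum θ - 1 else 0

/-- The vertex `u^k = ((b̃_{k-1}+1)e_{k-1}, θ_k - 1, θ_{k+1}, …, θ_d)` of `P` (paper's
1-indexing: coordinate `j` of the paper is index `j-1` here). -/
def uP (d : ℕ) (θ : Fin d → ℤ) (k : ℕ) : Fin d → ℤ :=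
  fun i => if (i : ℕ) = k - 2 then btil θ (k - 1) + 1
    else if (i : ℕ) = k - 1 then θ i - 1
    else if k ≤ (i : ℕ) then θ i else 0

/-- The vertex `v^{j,k} = (b̃_k e_j, 0, …, 0, θ_{k+1}, …, θ_d)` of `P` (1-indexed). -/
def vP (d : ℕ) (θ : Fin d → ℤ) (j k : ℕ) : Fin d → ℤ :=
  fun i => if (i : ℕ) = j - 1 then btil θ k
    else if k ≤ (i : ℕ) then θ i else 0

/-- The point `b·e_j` (1-indexed `j`). -/
def beP (d : ℕ) (θ : Fin d → ℤ) (j : ℕ) : Fin d → ℤ :=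
  fun i => if (i : ℕ) = j - 1 then bsum θ else 0

/-- The vertex `u^k = (b̃_{k-1}e_{k-1}, θ_k, …, θ_d)` of `Q` (1-indexed, `2 ≤ k ≤ d+1`). -/
def uQ (d : ℕ) (θ : Fin d → ℤ) (k : ℕ) : Fin d → ℤ :=
  fun i => if (i : ℕ) = k - 2 then btil θ (k - 1)
    else if k - 1 ≤ (i : ℕ) then θ i else 0

/-- The vertex `v^{j,k} = ((b̃_{k-1}-1)e_j, 0, …, 0, θ_k + 1, θ_{k+1}, …, θ_d)` of `Q`. -/
def vQ (d : ℕ) (θ : Fin d → ℤ) (j k : ℕ) : Fin d → ℤ :=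
  fun i => if (i : ℕ) = j - 1 then btil θ (k - 1) - 1
    else if (i : ℕ) = k - 1 then θ i + 1
    else if k ≤ (i : ℕ) then θ i else 0

/-- Edge boundary of a vertex set in a graph. -/
def eboundary {V : Type*} (G : SimpleGraph V) (S : Set V) : Set (V × V) :=
  {p | G.Adj p.1 p.2 ∧ p.1 ∈ S ∧ p.2 ∉ S}


section AuxLemmas

variable {n : ℕ} {D : Set (Fin n → ℝ)}

lemma le_of_forall_le_convexHull {S : Set (Fin n → ℝ)} (l : (Fin n → ℝ) →L[ℝ] ℝ) {c : ℝ}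
    (h : ∀ w ∈ S, l w ≤ c) {x} (hx : x ∈ convexHull ℝ S) : l x ≤ c := by
  have : convexHull ℝ S ⊆ {y | l y ≤ c} :=
    convexHull_min h (convex_halfSpace_le (l : (Fin n → ℝ) →ₗ[ℝ] ℝ).isLinear c)
  exact this hx

lemma exists_exposing (V : Finset (Fin n → ℝ)) {v}
    (hv : v ∈ (convexHull ℝ (V : Set (Fin n → ℝ))).extremePoints ℝ) :
    ∃ l : (Fin n → ℝ) →L[ℝ] ℝ, ∀ w ∈ V, w ≠ v → l w < l v := by
  have hconv : Convex ℝ (convexHull ℝ (V : Set (Fin n → ℝ))) := convex_convexHull _ _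
  have hnot : v ∉ convexHull ℝ ((V : Set (Fin n → ℝ)) \ {v}) := by
    have h2 := (hconv.mem_extremePoints_iff_mem_diff_convexHull_diff.mp hv).2
    intro hmem
    exact h2 (convexHull_mono (Set.diff_subset_diff_left (subset_convexHull ℝ _)) hmem)
  have hfin : ((V : Set (Fin n → ℝ)) \ {v}).Finite := V.finite_toSet.diff
  obtain ⟨l, u, hl, hu⟩ := geometric_hahn_banach_closed_point
    (convex_convexHull ℝ _) (hfin.isCompact_convexHull (𝕜 := ℝ)).isClosed hnot
  exact ⟨l, fun w hw hwv => (hl w (subset_convexHull ℝ _ ⟨hw, hwv⟩)).trans hu⟩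

lemma convexHull_extremePoints_of_finset (V : Finset (Fin n → ℝ)) :
    convexHull ℝ ((convexHull ℝ (V : Set (Fin n → ℝ))).extremePoints ℝ)
      = convexHull ℝ (V : Set (Fin n → ℝ)) := by
  have hcomp : IsCompact (convexHull ℝ (V : Set (Fin n → ℝ))) :=
    V.finite_toSet.isCompact_convexHull (𝕜 := ℝ)
  have hKM := closure_convexHull_extremePoints hcomp (convex_convexHull ℝ _)
  have hfin : ((convexHull ℝ (V : Set (Fin n → ℝ))).extremePoints ℝ).Finite :=
    V.finite_toSet.subset extremePoints_convexHull_subset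
  conv_rhs => rw [← hKM]
  exact ((hfin.isCompact_convexHull (𝕜 := ℝ)).isClosed.closure_eq).symm

lemma mem_convexHull_filter {V : Finset (Fin n → ℝ)} (l : (Fin n → ℝ) →L[ℝ] ℝ) {M : ℝ}
    (hb : ∀ w ∈ V, l w ≤ M) {x} (hx : x ∈ convexHull ℝ (V : Set (Fin n → ℝ)))
    (hxM : M ≤ l x) : x ∈ convexHull ℝ {w ∈ (V : Set (Fin n → ℝ)) | l w = M} := by
  rw [Finset.convexHull_eq] at hx
  obtain ⟨w, hw0, hw1, hwx⟩ := hx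
  have hxsum : x = ∑ y ∈ V, w y • y := by
    rw [← hwx, Finset.centerMass_eq_of_sum_1 _ _ hw1]; rfl
  have hlx : l x = ∑ y ∈ V, w y * l y := by
    rw [hxsum, map_sum]; simp [map_smul, smul_eq_mul]
  have hsum0 : ∑ y ∈ V, w y * (M - l y) ≤ 0 := by
    have : ∑ y ∈ V, w y * (M - l y) = M - l x := by
      rw [hlx]
      simp only [mul_sub]
      rw [Finset.sum_sub_distrib, ← Finset.sum_mul, hw1, one_mul]
    linarith
  have hzero : ∀ y ∈ V, w y * (M - l y) = 0 := by
    have hnn : ∀ y ∈ V, 0 ≤ w y * (M - l y) := fun y hy =>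
      mul_nonneg (hw0 y hy) (by linarith [hb y hy])
    have := Finset.sum_eq_zero_iff_of_nonneg hnn
    have hle : (0:ℝ) ≤ ∑ y ∈ V, w y * (M - l y) := Finset.sum_nonneg hnn
    exact this.mp (le_antisymm hsum0 hle)
  set F := V.filter (fun y => l y = M) with hF
  have hwz : ∀ y ∈ V, y ∉ F → w y = 0 := by
    intro y hy hyF
    have : l y ≠ M := by simp [hF, Finset.mem_filter, hy] at hyF; exact hyF
    have := hzero y hy
    rcases mul_eq_zero.mp this with h | h
    · exact h
    · exact absurd (by linarith : l y = M) ‹l y ≠ M›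
  have hsubF : F ⊆ V := Finset.filter_subset _ _
  have hw1F : ∑ y ∈ F, w y = 1 := by
    rw [← hw1]
    exact Finset.sum_subset hsubF (fun y hy hyF => hwz y hy hyF)
  have hxF : x = ∑ y ∈ F, w y • y := by
    rw [hxsum]
    exact (Finset.sum_subset hsubF (fun y hy hyF => by rw [hwz y hy hyF, zero_smul])).symm
  have : x ∈ convexHull ℝ (F : Set (Fin n → ℝ)) := by
    rw [Finset.mem_convexHull]
    exact ⟨w, fun y hy => hw0 y (hsubF hy), hw1F,
      by rw [Finset.centerMass_eq_of_sum_1 _ _ hw1F]; exact hxF.symm⟩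
  refine convexHull_mono ?_ this
  intro y hy
  simp only [hF, Finset.coe_filter, Set.mem_setOf_eq] at hy ⊢
  exact ⟨hy.1, hy.2⟩

lemma zero_mem_coneHull : (0 : Fin n → ℝ) ∈ coneHull D := Or.inl rfl

lemma smul_mem_coneHull {r : ℝ} (hr : 0 ≤ r) {z} (hz : z ∈ convexHull ℝ D) :
    r • z ∈ coneHull D := Or.inr ⟨r, hr, z, hz, rfl⟩

lemma coneHull_smul {c : ℝ} (hc : 0 ≤ c) {y} (hy : y ∈ coneHull D) : c • y ∈ coneHull D := by
  rcases hy with h | ⟨c', hc', z, hz, rfl⟩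
  · simp only [Set.mem_singleton_iff] at h
    subst h; rw [smul_zero]; exact zero_mem_coneHull
  · rw [smul_smul]; exact smul_mem_coneHull (mul_nonneg hc hc') hz

lemma coneHull_convex : Convex ℝ (coneHull D) := by
  intro x hx y hy a b ha hb hab
  rcases hx with hx | ⟨c₁, hc₁, z₁, hz₁, rfl⟩
  · simp only [Set.mem_singleton_iff] at hx
    subst hx
    rw [smul_zero, zero_add]
    exact coneHull_smul hb hy
  rcases hy with hy | ⟨c₂, hc₂, z₂, hz₂, rfl⟩
  · simp only [Set.mem_singleton_iff] at hy
    subst hy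
    rw [smul_zero, add_zero, smul_smul]
    exact smul_mem_coneHull (mul_nonneg ha hc₁) hz₁
  · set A := a * c₁ + b * c₂ with hA
    have hA0 : 0 ≤ A := add_nonneg (mul_nonneg ha hc₁) (mul_nonneg hb hc₂)
    rcases eq_or_lt_of_le hA0 with hAz | hApos
    · have h1 : a * c₁ = 0 := by nlinarith [mul_nonneg ha hc₁, mul_nonneg hb hc₂]
      have h2 : b * c₂ = 0 := by nlinarith [mul_nonneg ha hc₁, mul_nonneg hb hc₂]
      have : a • c₁ • z₁ + b • c₂ • z₂ = 0 := by
        rw [smul_smul, smul_smul, h1, h2, zero_smul, zero_smul, add_zero]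
      rw [this]; exact zero_mem_coneHull
    · have hz : (a * c₁ / A) • z₁ + (b * c₂ / A) • z₂ ∈ convexHull ℝ D := by
        refine (convex_convexHull ℝ D) hz₁ hz₂ (by positivity) (by positivity) ?_
        field_simp
        exact hA.symm
      have : a • c₁ • z₁ + b • c₂ • z₂ = A • ((a * c₁ / A) • z₁ + (b * c₂ / A) • z₂) := by
        rw [smul_add, smul_smul, smul_smul, smul_smul, smul_smul]
        rw [mul_div_cancel₀ _ (ne_of_gt hApos), mul_div_cancel₀ _ (ne_of_gt hApos)]
      rw [this]
      exact smul_mem_coneHull hA0 hz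
lemma convexHull_coneHull_eq : convexHull ℝ (coneHull D) = coneHull D :=
  coneHull_convex.convexHull_eq

lemma coneHull_mono' {P : Set (Fin n → ℝ)} (h : P ⊆ coneHull D) : coneHull P ⊆ coneHull D := by
  have hconv : convexHull ℝ P ⊆ coneHull D := by
    rw [← convexHull_coneHull_eq]; exact convexHull_mono h
  rintro y (hy | ⟨c, hc, z, hz, rfl⟩)
  · simp only [Set.mem_singleton_iff] at hy; subst hy; exact zero_mem_coneHull
  · exact coneHull_smul hc (hconv hz)

lemma sub_mem_coneHull {X : Set (Fin n → ℝ)} (hX : IsPolytope X) {v}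
    (hv : v ∈ X.extremePoints ℝ) {x} (hx : x ∈ X) :
    x - v ∈ coneHull {z | ∃ u, AdjVert X v u ∧ z = u - v} := by
  classical
  obtain ⟨V₀, hXeq⟩ := hX
  have hconvX : Convex ℝ X := hXeq ▸ convex_convexHull ℝ _
  have hvX : v ∈ X := extremePoints_subset hv
  have hfinext : (X.extremePoints ℝ).Finite := by
    rw [hXeq]; exact V₀.finite_toSet.subset extremePoints_convexHull_subset
  set Vf : Finset (Fin n → ℝ) := hfinext.toFinset with hVf
  have hVfc : (Vf : Set (Fin n → ℝ)) = X.extremePoints ℝ := hfinext.coe_toFinset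
  have hXf : X = convexHull ℝ (Vf : Set (Fin n → ℝ)) := by
    rw [hVfc, hXeq]
    exact (convexHull_extremePoints_of_finset V₀).symm
  have hmemext : ∀ s ∈ Vf, s ∈ X.extremePoints ℝ := by
    intro s hs; rw [← hVfc]; exact_mod_cast hs
  have hvVf : v ∈ Vf := by rw [← Finset.mem_coe, hVfc]; exact hv
  have hv' : v ∈ (convexHull ℝ (Vf : Set (Fin n → ℝ))).extremePoints ℝ := by
    rw [← hXf]; exact hv
  obtain ⟨lv, hlv⟩ := exists_exposing Vf hv'
  set t : (Fin n → ℝ) → ℝ := fun s => lv v - lv s with htdef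
  have htpos : ∀ s ∈ Vf, s ≠ v → 0 < t s := by
    intro s hs hsv
    have := hlv s hs hsv
    simp only [htdef]; linarith
  set p : (Fin n → ℝ) → (Fin n → ℝ) := fun s => (t s)⁻¹ • (s - v) with hpdef
  set P : Finset (Fin n → ℝ) := (Vf.erase v).image p with hPdef
  set D : Set (Fin n → ℝ) := {z | ∃ u, AdjVert X v u ∧ z = u - v} with hDdef
  have hsubrep : ∀ s ∈ Vf, s ≠ v → s - v = t s • p s := by
    intro s hs hsv
    simp only [hpdef]
    rw [smul_inv_smul₀ (ne_of_gt (htpos s hs hsv))]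
  -- Step 1: x - v ∈ coneHull ↑P
  have hstep1 : ∀ s ∈ Vf, s - v ∈ coneHull (P : Set (Fin n → ℝ)) := by
    intro s hs
    by_cases hsv : s = v
    · subst hsv; rw [sub_self]; exact zero_mem_coneHull
    · have hps : p s ∈ convexHull ℝ (P : Set (Fin n → ℝ)) := by
        apply subset_convexHull ℝ _
        rw [hPdef, Finset.coe_image]
        exact ⟨s, Finset.mem_coe.mpr (Finset.mem_erase.mpr ⟨hsv, hs⟩), rfl⟩
      rw [hsubrep s hs hsv]
      exact smul_mem_coneHull (htpos s hs hsv).le hps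
  have hxP : x - v ∈ coneHull (P : Set (Fin n → ℝ)) := by
    have hx' : x ∈ convexHull ℝ (Vf : Set (Fin n → ℝ)) := by rw [← hXf]; exact hx
    rw [Finset.convexHull_eq] at hx'
    obtain ⟨w, hw0, hw1, hwx⟩ := hx'
    have hxv : x - v = ∑ s ∈ Vf, w s • (s - v) := by
      have hxsum : x = ∑ s ∈ Vf, w s • s := by
        rw [← hwx, Finset.centerMass_eq_of_sum_1 _ _ hw1]; rfl
      rw [hxsum]
      simp only [smul_sub]
      rw [Finset.sum_sub_distrib, ← Finset.sum_smul, hw1, one_smul]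
    have hmem := Finset.centerMass_mem_convexHull Vf (w := w) (z := fun s => s - v)
      hw0 (by rw [hw1]; norm_num) (fun s hs => hstep1 s hs)
    rw [Finset.centerMass_eq_of_sum_1 _ _ hw1, convexHull_coneHull_eq] at hmem
    rw [hxv]
    exact hmem
  -- Step 2: extreme points of conv P are positive multiples of edge directions
  have hextP : ∀ q ∈ (convexHull ℝ (P : Set (Fin n → ℝ))).extremePoints ℝ,
      q ∈ coneHull D := by
    intro q hq
    obtain ⟨u₀, hu₀mem, hqu₀⟩ : ∃ u₀ ∈ Vf.erase v, p u₀ = q := by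
      have h1 := extremePoints_convexHull_subset hq
      rw [hPdef, Finset.coe_image] at h1
      obtain ⟨u₀, hu₀, h⟩ := h1
      exact ⟨u₀, hu₀, h⟩
    have hu₀Vf : u₀ ∈ Vf := Finset.mem_of_mem_erase hu₀mem
    have hu₀v : u₀ ≠ v := Finset.ne_of_mem_erase hu₀mem
    have htu₀ := htpos u₀ hu₀Vf hu₀v
    have hu₀X : u₀ ∈ X := extremePoints_subset (hmemext u₀ hu₀Vf)
    have h2 : u₀ - v = t u₀ • q := by rw [← hqu₀]; exact hsubrep u₀ hu₀Vf hu₀v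
    have huniq : ∀ s ∈ Vf.erase v, p s = q → s = u₀ := by
      intro s hs hps
      have hsVf := Finset.mem_of_mem_erase hs
      have hsv : s ≠ v := Finset.ne_of_mem_erase hs
      have hts := htpos s hsVf hsv
      have h1 : s - v = t s • q := by rw [← hps]; exact hsubrep s hsVf hsv
      rcases lt_trichotomy (t s) (t u₀) with hlt | heq | hgt
      · exfalso
        set ρ := t s / t u₀ with hρ
        have hρ1 : ρ < 1 := (div_lt_one htu₀).mpr hlt
        have hρ0 : 0 < ρ := div_pos hts htu₀
        have hrep : (1 - ρ) • v + ρ • u₀ = s := by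
          have hsv2 : s = v + ρ • (u₀ - v) := by
            rw [h2, smul_smul, hρ, div_mul_cancel₀ _ (ne_of_gt htu₀), ← h1]; abel
          rw [hsv2, smul_sub, sub_smul, one_smul]; abel
        have hseg : s ∈ openSegment ℝ v u₀ :=
          ⟨1 - ρ, ρ, by linarith, hρ0, by ring, hrep⟩
        have hsext := hmemext s hsVf
        rw [mem_extremePoints] at hsext
        exact hsv (hsext.2 v hvX u₀ hu₀X hseg).1.symm
      · exact sub_left_inj.mp (by rw [h1, h2, heq])
      · exfalso
        set ρ := t u₀ / t s with hρ
        have hρ1 : ρ < 1 := (div_lt_one hts).mpr hgt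
        have hρ0 : 0 < ρ := div_pos htu₀ hts
        have hrep : (1 - ρ) • v + ρ • s = u₀ := by
          have hsv2 : u₀ = v + ρ • (s - v) := by
            rw [h1, smul_smul, hρ, div_mul_cancel₀ _ (ne_of_gt hts), ← h2]; abel
          rw [hsv2, smul_sub, sub_smul, one_smul]; abel
        have hseg : u₀ ∈ openSegment ℝ v s :=
          ⟨1 - ρ, ρ, by linarith, hρ0, by ring, hrep⟩
        have hu₀ext := hmemext u₀ hu₀Vf
        rw [mem_extremePoints] at hu₀ext
        have hsX : s ∈ X := extremePoints_subset (hmemext s hsVf)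
        exact hu₀v (hu₀ext.2 v hvX s hsX hseg).1.symm
    obtain ⟨g, hg⟩ := exists_exposing P hq
    set h : (Fin n → ℝ) →L[ℝ] ℝ := g + (g q) • lv with hhdef
    have hlvp : ∀ s ∈ Vf, s ≠ v → lv (p s) = -1 := by
      intro s hs hsv
      have hts := htpos s hs hsv
      simp only [hpdef, map_smul, smul_eq_mul, map_sub]
      rw [show lv s - lv v = -(t s) by simp [htdef]]
      field_simp
    have hkey : ∀ s ∈ Vf, s ≠ v → h s - h v = t s * (g (p s) - g q) := by
      intro s hs hsv
      have e1 : h s - h v = h (s - v) := by rw [map_sub]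
      rw [e1, hsubrep s hs hsv, map_smul, smul_eq_mul]
      congr 1
      simp only [hhdef, ContinuousLinearMap.add_apply, ContinuousLinearMap.coe_smul',
        Pi.smul_apply, smul_eq_mul]
      rw [hlvp s hs hsv]; ring
    have hhu₀ : h u₀ = h v := by
      have := hkey u₀ hu₀Vf hu₀v
      rw [hqu₀] at this
      simp at this
      linarith
    have hhlt : ∀ s ∈ Vf, s ≠ v → s ≠ u₀ → h s < h v := by
      intro s hs hsv hsu
      have hpsq : p s ≠ q := fun hh => hsu (huniq s (Finset.mem_erase.mpr ⟨hsv, hs⟩) hh)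
      have hpsP : p s ∈ P := by
        rw [hPdef]; exact Finset.mem_image_of_mem p (Finset.mem_erase.mpr ⟨hsv, hs⟩)
      have hgs := hg (p s) hpsP hpsq
      have hk := hkey s hs hsv
      nlinarith [htpos s hs hsv]
    have hbound : ∀ s ∈ Vf, h s ≤ h v := by
      intro s hs
      by_cases hsv : s = v
      · subst hsv; exact le_refl _
      by_cases hsu : s = u₀
      · subst hsu; exact le_of_eq hhu₀
      · exact (hhlt s hs hsv hsu).le
    have hmax : ∀ y ∈ X, h y ≤ h v := by
      intro y hy
      rw [hXf] at hy
      exact le_of_forall_le_convexHull h hbound hy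
    have hexp : IsExposed ℝ X (segment ℝ v u₀) := by
      intro _
      refine ⟨h, ?_⟩
      apply Set.Subset.antisymm
      · intro y hy
        have hyX : y ∈ X := hconvX.segment_subset hvX hu₀X hy
        refine ⟨hyX, fun z hz => ?_⟩
        obtain ⟨a, b, ha, hb, hab, hy'⟩ := hy
        have hyval : h y = h v := by
          rw [← hy', map_add, map_smul, map_smul, hhu₀, smul_eq_mul, smul_eq_mul, ← add_mul,
            hab, one_mul]
        rw [hyval]; exact hmax z hz
      · rintro y ⟨hyX, hymax⟩
        have h2' : h v ≤ h y := hymax v hvX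
        have hy' : y ∈ convexHull ℝ {w ∈ (Vf : Set (Fin n → ℝ)) | h w = h v} := by
          refine mem_convexHull_filter h hbound ?_ h2'
          rw [← hXf]; exact hyX
        have hsub : {w ∈ (Vf : Set (Fin n → ℝ)) | h w = h v} ⊆ {v, u₀} := by
          rintro w ⟨hwVf, hwval⟩
          by_contra hcon
          simp only [Set.mem_insert_iff, Set.mem_singleton_iff] at hcon
          push_neg at hcon
          exact absurd hwval (ne_of_lt (hhlt w (Finset.mem_coe.mp hwVf) hcon.1 hcon.2))
        have hfin := convexHull_mono hsub hy'
        rwa [convexHull_pair] at hfin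
    have hadj : AdjVert X v u₀ := ⟨fun hvu => hu₀v hvu.symm, hv, hmemext u₀ hu₀Vf, hexp⟩
    have : q = (t u₀)⁻¹ • (u₀ - v) := by
      rw [h2, inv_smul_smul₀ (ne_of_gt htu₀)]
    rw [this]
    exact smul_mem_coneHull (inv_pos.mpr htu₀).le
      (subset_convexHull ℝ D ⟨u₀, hadj, rfl⟩)
  -- assemble
  have hconvP : convexHull ℝ (P : Set (Fin n → ℝ)) ⊆ coneHull D := by
    have he : convexHull ℝ (P : Set (Fin n → ℝ))
        = convexHull ℝ ((convexHull ℝ (P : Set (Fin n → ℝ))).extremePoints ℝ) :=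
      (convexHull_extremePoints_of_finset P).symm
    rw [he, ← convexHull_coneHull_eq]
    exact convexHull_mono hextP
  rcases hxP with h0 | ⟨c, hc, z, hz, hzz⟩
  · simp only [Set.mem_singleton_iff] at h0
    rw [h0]; exact zero_mem_coneHull
  · rw [hzz]; exact coneHull_smul hc (hconvP hz)

end AuxLemmas

/-- Every polytope equals the intersection of its tangent cones at its
vertices. -/
theorem polytope_eq_iInter_tangentCones {n : ℕ} (X : Set (Fin n → ℝ))
    (hX : IsPolytope X) (hne : X.Nonempty) :
    X = ⋂ v ∈ X.extremePoints ℝ, tangentCone X v := by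
  apply Set.Subset.antisymm
  · intro x hx
    simp only [Set.mem_iInter]
    intro v hv
    exact ⟨x - v, sub_mem_coneHull hX hv hx, by abel⟩
  · intro q hq
    by_contra hqX
    obtain ⟨V₀, hXeq⟩ := hX
    have hconvX : Convex ℝ X := hXeq ▸ convex_convexHull ℝ _
    have hcomp : IsCompact X := hXeq ▸ V₀.finite_toSet.isCompact_convexHull (𝕜 := ℝ)
    obtain ⟨l, u, hl, hu⟩ := geometric_hahn_banach_closed_point hconvX hcomp.isClosed hqX
    have hextne : (X.extremePoints ℝ).Nonempty := hcomp.extremePoints_nonempty hne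
    have hfinext : (X.extremePoints ℝ).Finite := by
      rw [hXeq]; exact V₀.finite_toSet.subset extremePoints_convexHull_subset
    obtain ⟨v, hv, hvmax⟩ := Set.exists_max_image (X.extremePoints ℝ) l hfinext hextne
    have hXf : X = convexHull ℝ (X.extremePoints ℝ) := by
      rw [hXeq]; exact (convexHull_extremePoints_of_finset V₀).symm
    have hmax : ∀ y ∈ X, l y ≤ l v := by
      intro y hy
      rw [hXf] at hy
      exact le_of_forall_le_convexHull l (fun w hw => hvmax w hw) hy
    have hvX : v ∈ X := extremePoints_subset hv
    have hq' : q ∈ tangentCone X v := by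
      simp only [Set.mem_iInter] at hq; exact hq v hv
    obtain ⟨y, hy, rfl⟩ := hq'
    have hly : l y ≤ 0 := by
      rcases hy with h0 | ⟨c, hc, z, hz, rfl⟩
      · simp only [Set.mem_singleton_iff] at h0; rw [h0]; simp
      · have hz0 : l z ≤ 0 := by
          refine le_of_forall_le_convexHull l (fun d hd => ?_) hz
          obtain ⟨u', hadj, rfl⟩ := hd
          have hu' : l u' ≤ l v := hmax u' (extremePoints_subset hadj.2.2.1)
          rw [map_sub]; linarith
        rw [map_smul, smul_eq_mul]
        exact mul_nonpos_iff.mpr (Or.inl ⟨hc, hz0⟩)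
    have hlv := hl v hvX
    have hsum : l (v + y) = l v + l y := map_add l v y
    linarith
end

section
/- The vertices of the grlex polytope P are exactly: the origin 0, the point θ, the point w = (b-1)e_d, the points u^k = ((b̃_{k-1}+1)e_{k-1}, θ_k - 1, θ_{k+1}, ..., θ_d) for 3 ≤ k ≤ d, and the points v^{j,k} = (b̃_k e_j, 0, ..., 0, θ_{k+1}, ..., θ_d) for 1 ≤ j < k ≤ d. -/
open Set Finset

section Helpers
variable {d : ℕ}

lemma toR_inj {x y : Fin d → ℤ} (h : toR x = toR y) : x = y := by
  funext i
  have := congrFun h i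
  simp only [toR] at this
  exact_mod_cast this

/-- single-coordinate sums -/
lemma sum_ite_nat (t : ℕ) (ht : t < d) (f : Fin d → ℤ) :
    ∑ i : Fin d, (if (i : ℕ) = t then f i else 0) = f ⟨t, ht⟩ := by
  rw [Finset.sum_eq_single ⟨t, ht⟩]
  · simp
  · intro i _ hne
    rw [if_neg]
    intro hc
    exact hne (Fin.ext hc)
  · intro h; exact absurd (Finset.mem_univ _) h

lemma low_add_high (k : ℕ) (f : Fin d → ℤ) :
    (∑ i ∈ Finset.univ.filter (fun i : Fin d => (i : ℕ) < k), f i) +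
      (∑ i ∈ Finset.univ.filter (fun i : Fin d => k ≤ (i : ℕ)), f i) = ∑ i, f i := by
  rw [show (Finset.univ.filter (fun i : Fin d => k ≤ (i : ℕ))) =
      (Finset.univ.filter (fun i : Fin d => ¬ (i : ℕ) < k)) from by
    apply Finset.filter_congr; intro i _; simp [not_lt]]
  exact Finset.sum_filter_add_sum_filter_not _ _ _

lemma partial_sum_agree (k : ℕ) (x y : Fin d → ℤ) (hsum : ∑ i, x i = ∑ i, y i)
    (hag : ∀ i : Fin d, k ≤ (i : ℕ) → x i = y i) :
    (∑ i ∈ Finset.univ.filter (fun i : Fin d => (i : ℕ) < k), x i) =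
      ∑ i ∈ Finset.univ.filter (fun i : Fin d => (i : ℕ) < k), y i := by
  have h1 := low_add_high k x
  have h2 := low_add_high k y
  have h3 : (∑ i ∈ Finset.univ.filter (fun i : Fin d => k ≤ (i : ℕ)), x i) =
      ∑ i ∈ Finset.univ.filter (fun i : Fin d => k ≤ (i : ℕ)), y i := by
    apply Finset.sum_congr rfl
    intro i hi
    exact hag i (by simpa using (Finset.mem_filter.1 hi).2)
  omega

lemma geom (b : ℤ) (n : ℕ) :
    b * ∑ j ∈ Finset.range n, (b + 1) ^ (j + 1) = (b + 1) ^ (n + 1) - (b + 1) := by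
  induction n with
  | zero => simp
  | succ n ih =>
    rw [Finset.sum_range_succ, mul_add, ih]
    ring

lemma sum_filter_lt_range (T : ℕ) (hT : T ≤ d) (g : ℕ → ℤ) :
    ∑ i ∈ Finset.univ.filter (fun i : Fin d => (i : ℕ) < T), g (i : ℕ) =
      ∑ j ∈ Finset.range T, g j := by
  rcases Nat.eq_zero_or_pos d with rfl | hd
  · have hT0 : T = 0 := by omega
    subst hT0; simp
  apply Finset.sum_nbij' (fun i : Fin d => (i : ℕ))
    (fun j : ℕ => if h : j < d then (⟨j, h⟩ : Fin d) else ⟨0, hd⟩)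
  · intro a ha
    simp only [Finset.mem_filter, Finset.mem_univ, true_and] at ha
    simpa using ha
  · intro a ha
    simp only [Finset.mem_range] at ha
    simp only [Finset.mem_filter, Finset.mem_univ, true_and]
    rw [dif_pos (by omega)]
    exact ha
  · intro a ha
    simp
  · intro a ha
    simp only [Finset.mem_range] at ha
    rw [dif_pos (by omega)]
  · intro a ha; rfl

end Helpers

section Master
variable {d : ℕ}

lemma L1 (b c : ℤ) (hb : 1 ≤ b) (hc : 1 ≤ c) (x y a : Fin d → ℤ) (T : Fin d)
    (haT : c * (b + 1) ^ ((T : ℕ) + 1) ≤ a T)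
    (ha : ∀ i : Fin d, i < T → 0 ≤ a i ∧ a i ≤ c * (b + 1) ^ ((i : ℕ) + 1))
    (hagree : ∀ i : Fin d, T < i → x i = y i)
    (hT : x T < y T)
    (hx0 : ∀ i, 0 ≤ x i) (hxb : ∀ i, x i ≤ b) (hy0 : ∀ i, 0 ≤ y i) :
    ∑ i, a i * x i + c * (b + 1) ≤ ∑ i, a i * y i := by
  have hbp : (0:ℤ) < b + 1 := by omega
  set f : Fin d → ℤ := fun i => a i * (x i - y i) with hf
  have hsplit : ∑ i, f i =
      (∑ i ∈ Finset.univ.filter (fun i : Fin d => i < T), f i) +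
      (∑ i ∈ Finset.univ.filter (fun i : Fin d => ¬ i < T), f i) :=
    (Finset.sum_filter_add_sum_filter_not _ _ _).symm
  have hset : Finset.univ.filter (fun i : Fin d => ¬ i < T) =
      insert T (Finset.univ.filter (fun i : Fin d => T < i)) := by
    ext i
    simp only [Finset.mem_filter, Finset.mem_univ, true_and, Finset.mem_insert]
    rw [Fin.lt_def, Fin.lt_def, Fin.ext_iff]
    omega
  have hTnot : T ∉ Finset.univ.filter (fun i : Fin d => T < i) := by simp
  have hhigh : ∑ i ∈ Finset.univ.filter (fun i : Fin d => ¬ i < T), f i = f T := by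
    rw [hset, Finset.sum_insert hTnot]
    have : ∑ i ∈ Finset.univ.filter (fun i : Fin d => T < i), f i = 0 := by
      apply Finset.sum_eq_zero
      intro i hi
      have hTi : T < i := by simpa using (Finset.mem_filter.1 hi).2
      simp [hf, hagree i hTi]
    rw [this, add_zero]
  have hfT : f T ≤ -(c * (b + 1) ^ ((T : ℕ) + 1)) := by
    have h1 : x T - y T ≤ -1 := by omega
    have h2 : 0 ≤ a T := le_trans (by positivity) haT
    have := mul_le_mul_of_nonneg_left h1 h2
    simp only [mul_neg_one] at this
    simp only [hf]
    omega
  have hlow : ∑ i ∈ Finset.univ.filter (fun i : Fin d => i < T), f i ≤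
      c * (b + 1) ^ ((T : ℕ) + 1) - c * (b + 1) := by
    have step1 : ∑ i ∈ Finset.univ.filter (fun i : Fin d => i < T), f i ≤
        ∑ i ∈ Finset.univ.filter (fun i : Fin d => i < T),
          (c * (b + 1) ^ ((i : ℕ) + 1) * b) := by
      apply Finset.sum_le_sum
      intro i hi
      have hiT : i < T := by simpa using (Finset.mem_filter.1 hi).2
      obtain ⟨ha0, hab⟩ := ha i hiT
      have e1 : f i ≤ a i * x i := by
        have : x i - y i ≤ x i := by have := hy0 i; omega
        have := mul_le_mul_of_nonneg_left this ha0
        simpa [hf] using this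
      have e2 : a i * x i ≤ c * (b + 1) ^ ((i : ℕ) + 1) * x i :=
        mul_le_mul_of_nonneg_right hab (hx0 i)
      have e3 : c * (b + 1) ^ ((i : ℕ) + 1) * x i ≤ c * (b + 1) ^ ((i : ℕ) + 1) * b :=
        mul_le_mul_of_nonneg_left (hxb i) (by positivity)
      omega
    have step2 : ∑ i ∈ Finset.univ.filter (fun i : Fin d => i < T),
        (c * (b + 1) ^ ((i : ℕ) + 1) * b) =
        ∑ j ∈ Finset.range (T : ℕ), (c * (b + 1) ^ (j + 1) * b) := by
      have heq : (Finset.univ.filter (fun i : Fin d => i < T)) =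
          (Finset.univ.filter (fun i : Fin d => (i : ℕ) < (T : ℕ))) := by
        apply Finset.filter_congr; intro i _; rw [Fin.lt_def]
      rw [heq]
      exact sum_filter_lt_range (T : ℕ) T.isLt.le (fun j => c * (b + 1) ^ (j + 1) * b)
    have step3 : ∑ j ∈ Finset.range (T : ℕ), (c * (b + 1) ^ (j + 1) * b) =
        c * ((b + 1) ^ ((T : ℕ) + 1) - (b + 1)) := by
      rw [← geom b (T : ℕ)]
      rw [Finset.mul_sum, Finset.mul_sum]
      apply Finset.sum_congr rfl
      intro j _; ring
    rw [step2, step3] at step1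
    have : c * ((b + 1) ^ ((T : ℕ) + 1) - (b + 1)) =
        c * (b + 1) ^ ((T : ℕ) + 1) - c * (b + 1) := by ring
    omega
  have htot : ∑ i, f i ≤ -(c * (b + 1)) := by
    rw [hsplit, hhigh]
    omega
  have hfin : ∑ i, f i = ∑ i, a i * x i - ∑ i, a i * y i := by
    rw [← Finset.sum_sub_distrib]
    apply Finset.sum_congr rfl
    intro i _; ring
  omega

lemma L2 (b c : ℤ) (hb : 1 ≤ b) (hc : 1 ≤ c) (x a : Fin d → ℤ)
    (hx0 : ∀ i, 0 ≤ x i) (hs : ∑ i, x i ≤ b - 1)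
    (ha : ∀ i : Fin d, 0 ≤ a i ∧ a i ≤ c * (b + 1) ^ ((i : ℕ) + 1)) :
    (c * (b + 1) ^ (d + 2)) * (∑ i, x i) + ∑ i, a i * x i <
      (c * (b + 1) ^ (d + 2)) * b := by
  have hbp : (0:ℤ) < b + 1 := by omega
  have hxb : ∀ i, x i ≤ b := by
    intro i
    have := Finset.single_le_sum (fun j _ => hx0 j) (Finset.mem_univ i)
    omega
  have h1 : ∑ i, a i * x i ≤ ∑ i : Fin d, (c * (b + 1) ^ ((i : ℕ) + 1) * b) := by
    apply Finset.sum_le_sum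
    intro i _
    obtain ⟨ha0, hab⟩ := ha i
    have e2 : a i * x i ≤ c * (b + 1) ^ ((i : ℕ) + 1) * x i :=
      mul_le_mul_of_nonneg_right hab (hx0 i)
    have e3 : c * (b + 1) ^ ((i : ℕ) + 1) * x i ≤ c * (b + 1) ^ ((i : ℕ) + 1) * b :=
      mul_le_mul_of_nonneg_left (hxb i) (by positivity)
    omega
  have h2 : ∑ i : Fin d, (c * (b + 1) ^ ((i : ℕ) + 1) * b) =
      c * ((b + 1) ^ (d + 1) - (b + 1)) := by
    rw [Fin.sum_univ_eq_sum_range (fun j => c * (b + 1) ^ (j + 1) * b) d]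
    rw [← geom b d, Finset.mul_sum, Finset.mul_sum]
    apply Finset.sum_congr rfl
    intro j _; ring
  have h3 : (b + 1) ^ (d + 1) * (b+1) = (b + 1) ^ (d + 2) := by ring
  have h4 : (b + 1) ^ (d + 1) ≤ (b + 1) ^ (d + 2) := by
    nlinarith [pow_pos hbp (d+1)]
  have hM : c * ((b + 1) ^ (d + 1) - (b + 1)) < c * (b + 1) ^ (d + 2) := by
    apply mul_lt_mul_of_pos_left _ (by omega)
    have := pow_pos hbp (d+1)
    omega
  have h5 : (c * (b + 1) ^ (d + 2)) * (∑ i, x i) ≤ (c * (b + 1) ^ (d + 2)) * (b - 1) :=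
    mul_le_mul_of_nonneg_left hs (by positivity)
  have h6 : (c * (b + 1) ^ (d + 2)) * (b-1) = (c * (b + 1) ^ (d + 2)) * b - c * (b+1)^(d+2) := by
    ring
  omega
end Master

def Feas {d : ℕ} (θ : Fin d → ℤ) (x : Fin d → ℤ) : Prop :=
  (∀ i, 0 ≤ x i) ∧ grlexLe x θ

section FeasBasics
variable {d : ℕ} {θ : Fin d → ℤ}

lemma feas_sum_le {x : Fin d → ℤ} (hx : Feas θ x) : ∑ i, x i ≤ bsum θ := by
  rcases hx.2 with h | h
  · exact le_of_lt h
  · exact le_of_eq h.1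

lemma feas_coord_le {x : Fin d → ℤ} (hx : Feas θ x) (i : Fin d) : x i ≤ bsum θ := by
  have h1 := Finset.single_le_sum (fun j _ => hx.1 j) (Finset.mem_univ i)
  have := feas_sum_le hx
  omega

lemma grlex_refl : grlexLe θ θ := Or.inr ⟨rfl, Or.inl rfl⟩

lemma feas_theta : Feas θ θ ∨ True := Or.inr trivial

lemma feas_witness {x : Fin d → ℤ} (hx : Feas θ x) (hsum : ∑ i, x i = bsum θ)
    (hne : x ≠ θ) : ∃ T : Fin d, x T < θ T ∧ ∀ k : Fin d, T < k → x k = θ k := by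
  rcases hx.2 with h | ⟨_, hlex⟩
  · exact absurd hsum (by rw [bsum] at hsum ⊢; omega)
  · rcases hlex with h | h
    · exact absurd h hne
    · exact h

lemma btil_zero : btil θ 0 = 0 := by simp [btil]

lemma btil_succ {m : ℕ} (hm : m < d) : btil θ (m + 1) = btil θ m + θ ⟨m, hm⟩ := by
  rw [btil, btil]
  have hset : Finset.univ.filter (fun i : Fin d => (i : ℕ) < m + 1) =
      insert (⟨m, hm⟩ : Fin d) (Finset.univ.filter (fun i : Fin d => (i : ℕ) < m)) := by
    ext i
    simp only [Finset.mem_filter, Finset.mem_univ, true_and, Finset.mem_insert, Fin.ext_iff]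
    omega
  rw [hset, Finset.sum_insert (by simp)]
  ring

lemma btil_succ' {m : ℕ} (K : Fin d) (hK : (K : ℕ) = m) (hm : m < d) :
    btil θ (m + 1) = btil θ m + θ K := by
  rw [btil_succ hm]
  congr 1
  apply congrArg
  apply Fin.ext
  show m = (K : ℕ)
  omega

lemma btil_ge (hθ : ∀ i, 1 ≤ θ i) {m : ℕ} (hm : m ≤ d) : (m : ℤ) ≤ btil θ m := by
  induction m with
  | zero => simp [btil_zero]
  | succ n ih =>
    have hn : n < d := by omega
    rw [btil_succ hn]
    have := hθ ⟨n, hn⟩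
    have := ih (by omega)
    push_cast
    omega

lemma btil_le_bsum (hθ : ∀ i, 1 ≤ θ i) (k : ℕ) : btil θ k ≤ bsum θ := by
  have := low_add_high k θ
  have h2 : 0 ≤ ∑ i ∈ Finset.univ.filter (fun i : Fin d => k ≤ (i : ℕ)), θ i :=
    Finset.sum_nonneg (fun i _ => le_trans (by norm_num) (hθ i))
  rw [btil, bsum]
  omega

lemma d_le_bsum (hθ : ∀ i, 1 ≤ θ i) : (d : ℤ) ≤ bsum θ := by
  have h := Finset.sum_le_sum (fun i (_ : i ∈ Finset.univ) => hθ i)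
  simpa [bsum] using h

lemma castSum (A x : Fin d → ℤ) :
    ∑ i, (A i : ℝ) * (toR x i) = ((∑ i, A i * x i : ℤ) : ℝ) := by
  push_cast [toR]
  rfl

end FeasBasics
lemma sep_extreme {n : ℕ} (S : Set (Fin n → ℝ)) (ℓ : (Fin n → ℝ) → ℝ)
    (hℓ : IsLinearMap ℝ ℓ) (v : Fin n → ℝ) (hv : v ∈ S)
    (h : ∀ x ∈ S, x ≠ v → ℓ x < ℓ v) :
    v ∈ (convexHull ℝ S).extremePoints ℝ := by
  have hle : ∀ x ∈ S, ℓ x ≤ ℓ v := by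
    intro x hx
    rcases eq_or_ne x v with rfl | hne
    · exact le_refl _
    · exact (h x hx hne).le
  have hhull : convexHull ℝ S ⊆ {w | ℓ w ≤ ℓ v} :=
    convexHull_min hle (convex_halfSpace_le hℓ _)
  -- key: any point of the hull with ℓ a = ℓ v equals v
  have key : ∀ a ∈ convexHull ℝ S, ℓ a = ℓ v → a = v := by
    intro a ha hav
    rw [_root_.convexHull_eq] at ha
    obtain ⟨ι, t, w, z, hw0, hw1, hzS, hcm⟩ := ha
    have hcm' : a = ∑ i ∈ t, w i • z i := by
      rw [← hcm, Finset.centerMass, hw1, inv_one, one_smul]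
    have hℓa : ℓ a = ∑ i ∈ t, w i * ℓ (z i) := by
      rw [hcm']
      have h1 : ℓ (∑ i ∈ t, w i • z i) = ∑ i ∈ t, ℓ (w i • z i) := by
        have := map_sum (hℓ.mk' ℓ) (fun i => w i • z i) t
        simp only [IsLinearMap.mk'_apply] at this
        exact this
      rw [h1]
      refine Finset.sum_congr rfl fun i _ => ?_
      rw [hℓ.map_smul]; rfl
    -- all z i with w i > 0 equal v
    have hall : ∀ i ∈ t, w i • z i = w i • v := by
      by_contra hcon
      push_neg at hcon
      obtain ⟨i0, hi0t, hi0⟩ := hcon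
      have hw0i : 0 < w i0 := by
        rcases lt_or_eq_of_le (hw0 i0 hi0t) with h' | h'
        · exact h'
        · exact absurd (by rw [← h', zero_smul, zero_smul]) hi0
      have hzv : z i0 ≠ v := fun hzz => hi0 (by rw [hzz])
      have hstrict : w i0 * ℓ (z i0) < w i0 * ℓ v :=
        mul_lt_mul_of_pos_left (h _ (hzS i0 hi0t) hzv) hw0i
      have hsum : ∑ i ∈ t, w i * ℓ (z i) < ∑ i ∈ t, w i * ℓ v := by
        apply Finset.sum_lt_sum
        · intro i hi
          exact mul_le_mul_of_nonneg_left (hle _ (hzS i hi)) (hw0 i hi)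
        · exact ⟨i0, hi0t, hstrict⟩
      rw [← hℓa, ← Finset.sum_mul, hw1, one_mul, hav] at hsum
      exact lt_irrefl _ hsum
    have : a = ∑ i ∈ t, w i • v := by
      rw [hcm']; exact Finset.sum_congr rfl hall
    rw [this, ← Finset.sum_smul, hw1, one_smul]
  refine mem_extremePoints.2 ⟨subset_convexHull ℝ S hv, ?_⟩
  intro x₁ hx₁ x₂ hx₂ hseg
  obtain ⟨a, b, ha, hb, hab, hsum⟩ := hseg
  have hℓ1 : ℓ x₁ ≤ ℓ v := hhull hx₁
  have hℓ2 : ℓ x₂ ≤ ℓ v := hhull hx₂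
  have hveq : ℓ v = a * ℓ x₁ + b * ℓ x₂ := by
    rw [← hsum, hℓ.map_add, hℓ.map_smul, hℓ.map_smul]; rfl
  have hone : a * ℓ v + b * ℓ v = ℓ v := by rw [← add_mul, hab, one_mul]
  have h1 : ℓ x₁ = ℓ v := by
    by_contra hne
    have hlt : ℓ x₁ < ℓ v := lt_of_le_of_ne hℓ1 hne
    have := mul_lt_mul_of_pos_left hlt ha
    have := mul_le_mul_of_nonneg_left hℓ2 hb.le
    linarith
  have h2 : ℓ x₂ = ℓ v := by
    by_contra hne
    have hlt : ℓ x₂ < ℓ v := lt_of_le_of_ne hℓ2 hne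
    have := mul_lt_mul_of_pos_left hlt hb
    have := mul_le_mul_of_nonneg_left hℓ1 ha.le
    linarith
  exact ⟨key x₁ hx₁ h1, key x₂ hx₂ h2⟩

section SepInt
variable {d : ℕ} {θ : Fin d → ℤ}

lemma mem_grlexP {x : Fin d → ℤ} (hx : Feas θ x) : toR x ∈ grlexP d θ :=
  subset_convexHull ℝ _ ⟨x, hx.1, hx.2, rfl⟩

lemma sep_int (A : Fin d → ℤ) (v : Fin d → ℤ) (hv : Feas θ v)
    (h : ∀ x : Fin d → ℤ, Feas θ x → x ≠ v → ∑ i, A i * x i < ∑ i, A i * v i) :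
    toR v ∈ (grlexP d θ).extremePoints ℝ := by
  apply sep_extreme _ (fun c => ∑ i, (A i : ℝ) * c i)
  · constructor
    · intro p q
      rw [← Finset.sum_add_distrib]
      apply Finset.sum_congr rfl
      intro i _
      simp [mul_add]
    · intro c p
      simp only [smul_eq_mul, Finset.mul_sum, Pi.smul_apply]
      apply Finset.sum_congr rfl
      intro i _
      ring
  · exact ⟨v, hv.1, hv.2, rfl⟩
  · rintro p ⟨x, hx0, hxg, rfl⟩ hne
    have hxv : x ≠ v := fun hh => hne (by rw [hh])
    have hint := h x ⟨hx0, hxg⟩ hxv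
    rw [castSum, castSum]
    exact_mod_cast hint

lemma mid_not_extreme (x y z : Fin d → ℤ) (hy : Feas θ y) (hz : Feas θ z)
    (hyx : y ≠ x) (hmid : ∀ i, y i + z i = 2 * x i) :
    toR x ∉ (grlexP d θ).extremePoints ℝ := by
  intro hext
  have h1 : toR y ∈ grlexP d θ := mem_grlexP hy
  have h2 : toR z ∈ grlexP d θ := mem_grlexP hz
  have hseg : toR x ∈ openSegment ℝ (toR y) (toR z) := by
    refine ⟨1/2, 1/2, by norm_num, by norm_num, by norm_num, ?_⟩
    funext i
    have := hmid i
    have hc : (y i : ℝ) + (z i : ℝ) = 2 * (x i : ℝ) := by exact_mod_cast this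
    simp only [Pi.add_apply, Pi.smul_apply, smul_eq_mul, toR]
    linarith
  have := (mem_extremePoints.1 hext).2 (toR y) h1 (toR z) h2 hseg
  exact hyx (toR_inj this.1)

end SepInt

section VertexBasics
variable {d : ℕ} {θ : Fin d → ℤ}

lemma tail_sum (k : ℕ) :
    ∑ i : Fin d, (if k ≤ (i : ℕ) then θ i else 0) = bsum θ - btil θ k := by
  have h := low_add_high k θ
  rw [← Finset.sum_filter]
  rw [btil] at *
  rw [bsum] at *
  omega

lemma sum_wP (hd : 1 ≤ d) : ∑ i, wP d θ i = bsum θ - 1 := by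
  simp only [wP]
  exact sum_ite_nat (d - 1) (by omega) _

lemma sum_vP {j k : ℕ} (hj : 1 ≤ j) (hjk : j < k) (hk : k ≤ d) :
    ∑ i, vP d θ j k i = bsum θ := by
  have hdec : ∀ i : Fin d, vP d θ j k i =
      (if (i : ℕ) = j - 1 then btil θ k else 0) + (if k ≤ (i : ℕ) then θ i else 0) := by
    intro i; simp only [vP]; split_ifs <;> omega
  rw [Finset.sum_congr rfl (fun i _ => hdec i), Finset.sum_add_distrib,
    sum_ite_nat (j - 1) (by omega) _, tail_sum]
  ring

lemma sum_uP {k : ℕ} (hk3 : 3 ≤ k) (hk : k ≤ d) :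
    ∑ i, uP d θ k i = bsum θ := by
  have hdec : ∀ i : Fin d, uP d θ k i =
      (if (i : ℕ) = k - 2 then btil θ (k - 1) + 1 else 0) +
      ((if (i : ℕ) = k - 1 then (-1 : ℤ) else 0) +
       (if k - 1 ≤ (i : ℕ) then θ i else 0)) := by
    intro i; simp only [uP]; split_ifs <;> omega
  rw [Finset.sum_congr rfl (fun i _ => hdec i), Finset.sum_add_distrib,
    Finset.sum_add_distrib, sum_ite_nat (k - 2) (by omega) _,
    sum_ite_nat (k - 1) (by omega) _, tail_sum]
  ring

lemma wP_nonneg (hθ : ∀ i, 1 ≤ θ i) (hd : 3 ≤ d) : ∀ i, 0 ≤ wP d θ i := by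
  intro i
  have := d_le_bsum hθ
  simp only [wP]
  split_ifs <;> omega

lemma feas_wP (hθ : ∀ i, 1 ≤ θ i) (hd : 3 ≤ d) : Feas θ (wP d θ) := by
  refine ⟨wP_nonneg hθ hd, Or.inl ?_⟩
  rw [sum_wP (by omega), bsum]
  have := d_le_bsum hθ
  rw [bsum] at this
  omega

lemma vP_nonneg (hθ : ∀ i, 1 ≤ θ i) {j k : ℕ} (hk : k ≤ d) : ∀ i, 0 ≤ vP d θ j k i := by
  intro i
  have h1 := btil_ge hθ hk
  have h2 := hθ i
  simp only [vP]
  split_ifs <;> omega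

lemma feas_vP (hθ : ∀ i, 1 ≤ θ i) {j k : ℕ} (hj : 1 ≤ j) (hjk : j < k) (hk : k ≤ d) :
    Feas θ (vP d θ j k) := by
  refine ⟨vP_nonneg hθ hk, Or.inr ⟨by rw [sum_vP hj hjk hk]; rfl, Or.inr ?_⟩⟩
  refine ⟨⟨k - 1, by omega⟩, ?_, ?_⟩
  · simp only [vP]
    rw [if_neg (by omega), if_neg (by omega)]
    exact hθ _
  · intro l hl
    rw [Fin.lt_def] at hl
    simp only at hl
    simp only [vP]; rw [if_neg (by omega), if_pos (by omega)]

lemma uP_nonneg (hθ : ∀ i, 1 ≤ θ i) {k : ℕ} (hk3 : 3 ≤ k) (hk : k ≤ d) :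
    ∀ i, 0 ≤ uP d θ k i := by
  intro i
  have h1 := btil_ge hθ (show k - 1 ≤ d by omega)
  have h2 := hθ i
  simp only [uP]
  split_ifs <;> omega

lemma feas_uP (hθ : ∀ i, 1 ≤ θ i) {k : ℕ} (hk3 : 3 ≤ k) (hk : k ≤ d) :
    Feas θ (uP d θ k) := by
  refine ⟨uP_nonneg hθ hk3 hk, Or.inr ⟨by rw [sum_uP hk3 hk]; rfl, Or.inr ?_⟩⟩
  obtain ⟨K, hK⟩ : ∃ K : Fin d, (K : ℕ) = k - 1 := ⟨⟨k - 1, by omega⟩, rfl⟩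
  refine ⟨K, ?_, ?_⟩
  · simp only [uP]
    rw [if_neg (by omega), if_pos (by omega)]
    omega
  · intro l hl
    rw [Fin.lt_def, hK] at hl
    simp only [uP]; rw [if_neg (by omega), if_neg (by omega), if_pos (by omega)]

end VertexBasics

section VertexExtreme
variable {d : ℕ} {θ : Fin d → ℤ}

lemma expand_weights (M : ℤ) (a x : Fin d → ℤ) :
    ∑ i, (M + a i) * x i = M * (∑ i, x i) + ∑ i, a i * x i := by
  rw [Finset.mul_sum, ← Finset.sum_add_distrib]
  apply Finset.sum_congr rfl
  intro i _; ring

lemma bsum_pos (hθ : ∀ i, 1 ≤ θ i) (hd : 3 ≤ d) : 3 ≤ bsum θ := by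
  have := d_le_bsum hθ (θ := θ)
  omega

lemma feas_zero (hθ : ∀ i, 1 ≤ θ i) (hd : 3 ≤ d) : Feas θ (0 : Fin d → ℤ) := by
  refine ⟨fun i => le_refl 0, Or.inl ?_⟩
  have := bsum_pos hθ hd
  rw [bsum] at this
  simpa using (by omega : (0:ℤ) < ∑ i, θ i)

lemma zero_extreme (hθ : ∀ i, 1 ≤ θ i) (hd : 3 ≤ d) :
    toR (0 : Fin d → ℤ) ∈ (grlexP d θ).extremePoints ℝ := by
  apply sep_int (fun _ => (-1 : ℤ)) _ (feas_zero hθ hd)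
  intro x hx hne
  obtain ⟨i0, hi0⟩ := Function.ne_iff.mp hne
  have hpos : 0 < ∑ i, x i :=
    Finset.sum_pos' (fun i _ => hx.1 i)
      ⟨i0, Finset.mem_univ i0, lt_of_le_of_ne (hx.1 i0) (Ne.symm hi0)⟩
  have h1 : ∑ i, (-1 : ℤ) * x i = -∑ i, x i := by
    rw [← Finset.sum_neg_distrib]
    apply Finset.sum_congr rfl
    intro i _; ring
  have h2 : ∑ i, (-1 : ℤ) * (0 : Fin d → ℤ) i = 0 := by simp
  omega

lemma theta_extreme (hθ : ∀ i, 1 ≤ θ i) (hd : 3 ≤ d) :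
    toR θ ∈ (grlexP d θ).extremePoints ℝ := by
  set b := bsum θ with hbdef
  have hb : 1 ≤ b := by have := bsum_pos hθ hd; omega
  set a : Fin d → ℤ := fun i => (b + 1) ^ ((i : ℕ) + 1) with ha
  apply sep_int (fun i => (b + 1) ^ (d + 2) + a i) θ ⟨fun i => le_trans zero_le_one (hθ i), grlex_refl⟩
  intro x hx hne
  rw [expand_weights, expand_weights]
  have hsum_le : ∑ i, x i ≤ b := feas_sum_le hx
  rcases eq_or_lt_of_le hsum_le with heq | hlt
  · -- sum = b : use L1
    obtain ⟨T, hT1, hT2⟩ := feas_witness hx heq hne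
    have := L1 b 1 hb (le_refl 1) x θ a T
      (by rw [ha]; simp) 
      (fun i _ => ⟨by positivity, by simp [ha]⟩)
      hT2 hT1 hx.1 (feas_coord_le hx) (fun i => le_trans zero_le_one (hθ i))
    have hθsum : ∑ i, θ i = b := rfl
    have hMx : (b+1)^(d+2) * (∑ i, x i) = (b+1)^(d+2) * (∑ i, θ i) := by rw [heq, hθsum]
    have h1 : (1:ℤ) * (b+1) = b + 1 := one_mul _
    omega
  · -- sum < b : use L2
    have := L2 b 1 hb (le_refl 1) x a hx.1 (by omega)
      (fun i => ⟨by positivity, by simp [ha]⟩)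
    have haθ : 0 ≤ ∑ i, a i * θ i :=
      Finset.sum_nonneg (fun i _ => mul_nonneg (by positivity) (le_trans zero_le_one (hθ i)))
    have hθsum : ∑ i, θ i = b := rfl
    have h1 : (1 : ℤ) * (b+1)^(d+2) = (b+1)^(d+2) := one_mul _
    rw [h1] at this
    have hMθ : (b+1)^(d+2) * (∑ i, θ i) = (b+1)^(d+2) * b := by rw [hθsum]
    omega

lemma w_extreme (hθ : ∀ i, 1 ≤ θ i) (hd : 3 ≤ d) :
    toR (wP d θ) ∈ (grlexP d θ).extremePoints ℝ := by
  set b := bsum θ with hbdef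
  have hb : 3 ≤ b := bsum_pos hθ hd
  obtain ⟨L, hL⟩ : ∃ L : Fin d, (L : ℕ) = d - 1 := ⟨⟨d - 1, by omega⟩, rfl⟩
  apply sep_int (fun i => if (i : ℕ) = d - 1 then 1 else -1) _ (feas_wP hθ hd)
  intro x hx hne
  -- key identity: ∑ A x = 2 * x L - ∑ x
  have key : ∀ y : Fin d → ℤ,
      ∑ i : Fin d, (if (i : ℕ) = d - 1 then (1:ℤ) else -1) * y i = 2 * y L - ∑ i, y i := by
    intro y
    have h1 : ∀ i : Fin d, (if (i : ℕ) = d - 1 then (1:ℤ) else -1) * y i =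
        (if (i : ℕ) = d - 1 then 2 * y i else 0) - y i := by
      intro i; split_ifs <;> ring
    rw [Finset.sum_congr rfl (fun i _ => h1 i), Finset.sum_sub_distrib,
      sum_ite_nat (d - 1) (by omega) (fun i => 2 * y i)]
    have hLeq : (⟨d - 1, by omega⟩ : Fin d) = L := by apply Fin.ext; show d - 1 = (L:ℕ); omega
    rw [hLeq]
  rw [key, key]
  have hwL : wP d θ L = b - 1 := by simp only [wP]; rw [if_pos hL]
  have hws : ∑ i, wP d θ i = b - 1 := sum_wP (by omega)
  rw [hwL, hws]
  have hxL_le_sum : x L ≤ ∑ i, x i :=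
    Finset.single_le_sum (fun j _ => hx.1 j) (Finset.mem_univ L)
  have hsum_le : ∑ i, x i ≤ b := feas_sum_le hx
  rcases eq_or_lt_of_le hsum_le with heq | hlt
  · -- sum = b: x L ≤ θ L ≤ b - 2
    have hxLθ : x L ≤ θ L := by
      rcases eq_or_ne x θ with rfl | hne'
      · exact le_refl _
      · obtain ⟨T, hT1, hT2⟩ := feas_witness hx heq hne'
        rcases eq_or_ne T L with rfl | hTL
        · exact le_of_lt hT1
        · have : T < L := by
            rw [Fin.lt_def, hL]
            have := T.isLt
            have : (T : ℕ) ≠ d - 1 := fun hc => hTL (Fin.ext (by rw [hc, hL]))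
            omega
          rw [hT2 L this]
    have hθL : θ L ≤ b - 2 := by
      have herase : ∑ i ∈ Finset.univ.erase L, θ i + θ L = ∑ i, θ i :=
        Finset.sum_erase_add _ _ (Finset.mem_univ L)
      have hcard : (Finset.univ.erase L).card = d - 1 := by
        rw [Finset.card_erase_of_mem (Finset.mem_univ L), Finset.card_univ, Fintype.card_fin]
      have hge : ((d - 1 : ℕ) : ℤ) ≤ ∑ i ∈ Finset.univ.erase L, θ i := by
        calc ((d-1:ℕ):ℤ) = (Finset.univ.erase L).card • (1:ℤ) := by
              rw [hcard]; simp
          _ ≤ ∑ i ∈ Finset.univ.erase L, θ i :=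
              Finset.card_nsmul_le_sum _ _ _ (fun i _ => hθ i)
      have : ((d - 1 : ℕ) : ℤ) ≥ 2 := by
        have : (3:ℕ) ≤ d := hd
        push_cast
        omega
      rw [hbdef, bsum]
      omega
    omega
  · -- sum ≤ b - 1
    rcases lt_or_ge (x L) (b - 1) with hxL | hxL
    · omega
    · -- x L = b - 1, sum = b - 1, so x = wP: contradiction
      have hxLe : x L = b - 1 := by omega
      have hse : ∑ i, x i = b - 1 := by omega
      exfalso
      apply hne
      have herase : ∑ i ∈ Finset.univ.erase L, x i + x L = ∑ i, x i :=
        Finset.sum_erase_add _ _ (Finset.mem_univ L)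
      have hzero : ∀ i ∈ Finset.univ.erase L, x i = 0 := by
        rw [← Finset.sum_eq_zero_iff_of_nonneg (fun i _ => hx.1 i)]
        omega
      funext i
      rcases eq_or_ne i L with rfl | hiL
      · rw [hxLe]; simp only [wP]; rw [if_pos hL]
      · rw [hzero i (Finset.mem_erase.2 ⟨hiL, Finset.mem_univ i⟩)]
        simp only [wP]
        rw [if_neg]
        intro hc
        exact hiL (Fin.ext (by rw [hc, hL]))

end VertexExtreme

section VExtreme
variable {d : ℕ} {θ : Fin d → ℤ}

lemma high_sum_theta (k : ℕ) :
    ∑ i ∈ Finset.univ.filter (fun i : Fin d => k ≤ (i : ℕ)), θ i = bsum θ - btil θ k := by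
  have h := low_add_high k θ
  rw [btil, bsum] at *
  omega

lemma v_extreme (hθ : ∀ i, 1 ≤ θ i) (hd : 3 ≤ d) {j k : ℕ}
    (hj : 1 ≤ j) (hjk : j < k) (hk : k ≤ d) :
    toR (vP d θ j k) ∈ (grlexP d θ).extremePoints ℝ := by
  set b := bsum θ with hbdef
  have hb : 3 ≤ b := bsum_pos hθ hd
  set v := vP d θ j k with hv
  set a : Fin d → ℤ := fun i =>
    (if (i : ℕ) = j - 1 then 1 else 0) +
    (if k ≤ (i : ℕ) then (b + 1) ^ ((i : ℕ) + 1) else 0) with ha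
  have hbounds : ∀ i : Fin d, 0 ≤ a i ∧ a i ≤ 1 * (b + 1) ^ ((i : ℕ) + 1) := by
    intro i
    have hp : 1 ≤ (b + 1) ^ ((i : ℕ) + 1) := one_le_pow₀ (by omega)
    simp only [ha]
    split_ifs <;> omega
  have hvnn : ∀ i, 0 ≤ v i := vP_nonneg hθ hk
  have hfv : Feas θ v := feas_vP hθ hj hjk hk
  apply sep_int (fun i => (b + 1) ^ (d + 2) + a i) v hfv
  intro x hx hne
  rw [expand_weights, expand_weights]
  have hsumv : ∑ i, v i = b := sum_vP hj hjk hk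
  have hsum_le : ∑ i, x i ≤ b := feas_sum_le hx
  rcases eq_or_lt_of_le hsum_le with heq | hlt
  · -- sum x = b
    by_cases hag : ∀ i : Fin d, k ≤ (i : ℕ) → x i = θ i
    · -- B1 : agree on top block
      have hagv : ∀ i : Fin d, k ≤ (i : ℕ) → x i = v i := by
        intro i hki
        rw [hag i hki, hv]
        simp only [vP]
        rw [if_neg (by omega), if_pos hki]
      have hlowx := partial_sum_agree k x v (by rw [heq, hsumv]) hagv
      have hlowv : ∑ i ∈ Finset.univ.filter (fun i : Fin d => (i : ℕ) < k), v i
          = btil θ k := by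
        have hh := low_add_high k v
        have hhigh : ∑ i ∈ Finset.univ.filter (fun i : Fin d => k ≤ (i : ℕ)), v i
            = b - btil θ k := by
          rw [Finset.sum_congr rfl (fun i hi => by
            have hki : k ≤ (i : ℕ) := by simpa using (Finset.mem_filter.1 hi).2
            show v i = θ i
            rw [hv]; simp only [vP]; rw [if_neg (by omega), if_pos hki])]
          exact high_sum_theta k
        omega
      obtain ⟨J, hJ⟩ : ∃ J : Fin d, (J : ℕ) = j - 1 := ⟨⟨j - 1, by omega⟩, rfl⟩
      have hJmem : J ∈ Finset.univ.filter (fun i : Fin d => (i : ℕ) < k) := by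
        simp only [Finset.mem_filter, Finset.mem_univ, true_and]
        omega
      have hxJle : x J ≤ btil θ k := by
        have h1 := Finset.single_le_sum (f := x) (fun i _ => hx.1 i) hJmem
        omega
      have hvJ : v J = btil θ k := by rw [hv]; simp only [vP]; rw [if_pos hJ]
      rcases eq_or_lt_of_le hxJle with hxJ | hxJ
      · -- x J = btil θ k forces x = v, contradiction
        exfalso; apply hne
        have herase := Finset.add_sum_erase _ x hJmem
        have hzero : ∀ i ∈ (Finset.univ.filter (fun i : Fin d => (i : ℕ) < k)).erase J,
            x i = 0 := by
          rw [← Finset.sum_eq_zero_iff_of_nonneg (fun i _ => hx.1 i)]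
          omega
        funext i
        by_cases hik : (i : ℕ) < k
        · rcases eq_or_ne i J with rfl | hiJ
          · omega
          · rw [hzero i (Finset.mem_erase.2 ⟨hiJ, by
              simp only [Finset.mem_filter, Finset.mem_univ, true_and]; exact hik⟩)]
            rw [hv]; simp only [vP]
            rw [if_neg (fun hc => hiJ (Fin.ext (by rw [hc, hJ]))), if_neg (by omega)]
        · exact hagv i (by omega)
      · -- x J < btil θ k
        have hdiff : ∑ i, a i * x i - ∑ i, a i * v i = x J - v J := by
          have hpt : ∀ i : Fin d, a i * x i - a i * v i =
              (if (i : ℕ) = j - 1 then x i - v i else 0) := by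
            intro i
            simp only [ha]
            by_cases h1 : (i : ℕ) = j - 1
            · rw [if_pos h1, if_pos h1, if_neg (by omega)]; ring
            · rw [if_neg h1, if_neg h1]
              by_cases h2 : k ≤ (i : ℕ)
              · rw [if_pos h2, hagv i h2]; ring
              · rw [if_neg h2]; ring
          rw [← Finset.sum_sub_distrib,
            Finset.sum_congr rfl (fun i _ => hpt i),
            sum_ite_nat (j - 1) (by omega) (fun i => x i - v i)]
          have hJeq : (⟨j - 1, by omega⟩ : Fin d) = J := by
            apply Fin.ext; show j - 1 = (J : ℕ); omega
          rw [hJeq]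
        have hM : (b+1)^(d+2) * (∑ i, x i) = (b+1)^(d+2) * (∑ i, v i) := by
          rw [heq, hsumv]
        omega
    · -- B2 : some top coordinate differs
      push_neg at hag
      obtain ⟨i0, hi0k, hi0⟩ := hag
      have hxθ : x ≠ θ := fun hc => hi0 (by rw [hc])
      obtain ⟨T, hT1, hT2⟩ := feas_witness hx heq hxθ
      have hTk : k ≤ (T : ℕ) := by
        by_contra hlt'
        push_neg at hlt'
        exact hi0 (hT2 i0 (by rw [Fin.lt_def]; omega))
      have hvT : v T = θ T := by
        rw [hv]; simp only [vP]; rw [if_neg (by omega), if_pos hTk]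
      have hL1 := L1 b 1 (by omega) (le_refl 1) x v a T
        (by simp only [ha]
            rw [if_neg (by omega), if_pos hTk]
            omega)
        (fun i _ => hbounds i)
        (fun i hi => by
          rw [Fin.lt_def] at hi
          rw [hT2 i (by rw [Fin.lt_def]; omega), hv]
          simp only [vP]
          rw [if_neg (by omega), if_pos (by omega)])
        (by omega)
        hx.1 (feas_coord_le hx) hvnn
      have hM : (b+1)^(d+2) * (∑ i, x i) = (b+1)^(d+2) * (∑ i, v i) := by
        rw [heq, hsumv]
      omega
  · -- sum x < b
    have hL2 := L2 b 1 (by omega) (le_refl 1) x a hx.1 (by omega) hbounds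
    have hav : 0 ≤ ∑ i, a i * v i :=
      Finset.sum_nonneg (fun i _ => mul_nonneg (hbounds i).1 (hvnn i))
    have hMv : (b+1)^(d+2) * (∑ i, v i) = (b+1)^(d+2) * b := by rw [hsumv]
    have h1 : (1 : ℤ) * (b+1)^(d+2) = (b+1)^(d+2) := one_mul _
    rw [h1] at hL2
    omega
end VExtreme

section UExtreme
variable {d : ℕ} {θ : Fin d → ℤ}

lemma u_extreme (hθ : ∀ i, 1 ≤ θ i) (hd : 3 ≤ d) {k : ℕ}
    (hk3 : 3 ≤ k) (hk : k ≤ d) :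
    toR (uP d θ k) ∈ (grlexP d θ).extremePoints ℝ := by
  set b := bsum θ with hbdef
  have hb : 3 ≤ b := bsum_pos hθ hd
  set u := uP d θ k with hu
  set a : Fin d → ℤ := fun i =>
    (if (i : ℕ) = k - 2 then 2 else 0) +
    ((if (i : ℕ) = k - 1 then 3 else 0) +
     (if k ≤ (i : ℕ) then 2 * (b + 1) ^ ((i : ℕ) + 1) else 0)) with ha
  have hbounds : ∀ i : Fin d, 0 ≤ a i ∧ a i ≤ 2 * (b + 1) ^ ((i : ℕ) + 1) := by
    intro i
    have hp : 1 ≤ (b + 1) ^ ((i : ℕ) + 1) := one_le_pow₀ (by omega)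
    have hp2 : b + 1 ≤ (b + 1) ^ ((i : ℕ) + 1) := le_self_pow₀ (by omega) (by omega)
    simp only [ha]
    split_ifs <;> omega
  have hunn : ∀ i, 0 ≤ u i := uP_nonneg hθ hk3 hk
  have hfu : Feas θ u := feas_uP hθ hk3 hk
  obtain ⟨K2, hK2⟩ : ∃ K : Fin d, (K : ℕ) = k - 2 := ⟨⟨k - 2, by omega⟩, rfl⟩
  obtain ⟨K1, hK1⟩ : ∃ K : Fin d, (K : ℕ) = k - 1 := ⟨⟨k - 1, by omega⟩, rfl⟩
  have hK21 : K2 ≠ K1 := fun hc => by rw [hc] at hK2; omega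
  have hu2 : u K2 = btil θ (k - 1) + 1 := by rw [hu]; simp only [uP]; rw [if_pos hK2]
  have hu1 : u K1 = θ K1 - 1 := by
    rw [hu]; simp only [uP]; rw [if_neg (by omega), if_pos hK1]
  have hbt1 : btil θ k = btil θ (k - 1) + θ K1 := by
    have hkk : k - 1 + 1 = k := by omega
    have h := btil_succ' (θ := θ) K1 hK1 (by omega)
    rw [hkk] at h
    exact h
  have hbt2 : btil θ (k - 1) = btil θ (k - 2) + θ K2 := by
    have hkk : k - 2 + 1 = k - 1 := by omega
    have h := btil_succ' (θ := θ) K2 hK2 (by omega)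
    rw [hkk] at h
    exact h
  have hbt3 : (1 : ℤ) ≤ btil θ (k - 2) := by
    have := btil_ge hθ (show k - 2 ≤ d by omega)
    have : ((k - 2 : ℕ) : ℤ) ≥ 1 := by push_cast; omega
    have := btil_ge hθ (show k - 2 ≤ d by omega)
    omega
  apply sep_int (fun i => 2 * (b + 1) ^ (d + 2) + a i) u hfu
  intro x hx hne
  rw [expand_weights, expand_weights]
  have hsumu : ∑ i, u i = b := sum_uP hk3 hk
  have hsum_le : ∑ i, x i ≤ b := feas_sum_le hx
  rcases eq_or_lt_of_le hsum_le with heq | hlt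
  · -- sum x = b
    by_cases hag : ∀ i : Fin d, k ≤ (i : ℕ) → x i = θ i
    · -- B1
      have hagu : ∀ i : Fin d, k ≤ (i : ℕ) → x i = u i := by
        intro i hki
        rw [hag i hki, hu]; simp only [uP]
        rw [if_neg (by omega), if_neg (by omega), if_pos hki]
      have hlowx : ∑ i ∈ Finset.univ.filter (fun i : Fin d => (i : ℕ) < k), x i
          = btil θ k := by
        have := partial_sum_agree k x θ (by rw [heq]; rfl) hag
        rw [btil]
        exact this
      -- the pair {K2, K1}
      have hpairsub : ({K2, K1} : Finset (Fin d)) ⊆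
          Finset.univ.filter (fun i : Fin d => (i : ℕ) < k) := by
        intro i hi
        simp only [Finset.mem_insert, Finset.mem_singleton] at hi
        simp only [Finset.mem_filter, Finset.mem_univ, true_and]
        rcases hi with rfl | rfl <;> omega
      have hpairsum : ∑ i ∈ ({K2, K1} : Finset (Fin d)), x i = x K2 + x K1 :=
        Finset.sum_pair hK21
      have hpairle : x K2 + x K1 ≤ btil θ k := by
        have := Finset.sum_le_sum_of_subset_of_nonneg hpairsub
          (fun i _ _ => hx.1 i)
        omega
      -- lex: x K1 ≤ θ K1
      have hxk1le : x K1 ≤ θ K1 := by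
        rcases eq_or_ne x θ with rfl | hne'
        · exact le_refl _
        · obtain ⟨T, hT1, hT2⟩ := feas_witness hx heq hne'
          have hTk : (T : ℕ) < k := by
            by_contra hc
            push_neg at hc
            have := hag T hc
            omega
          rcases eq_or_ne T K1 with rfl | hTne
          · exact le_of_lt hT1
          · have : (T : ℕ) ≠ k - 1 := fun hc => hTne (Fin.ext (by omega))
            rw [hT2 K1 (by rw [Fin.lt_def]; omega)]
      -- diff formula
      have hdiff : ∑ i, a i * x i - ∑ i, a i * u i =
          2 * (x K2 - u K2) + 3 * (x K1 - u K1) := by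
        have hpt : ∀ i : Fin d, a i * x i - a i * u i =
            (if (i : ℕ) = k - 2 then 2 * (x i - u i) else 0) +
            (if (i : ℕ) = k - 1 then 3 * (x i - u i) else 0) := by
          intro i
          simp only [ha]
          split_ifs
          all_goals try ring
          all_goals (rw [hagu i (by omega)]; ring)
        rw [← Finset.sum_sub_distrib,
          Finset.sum_congr rfl (fun i _ => hpt i),
          Finset.sum_add_distrib,
          sum_ite_nat (k - 2) (by omega) (fun i => 2 * (x i - u i)),
          sum_ite_nat (k - 1) (by omega) (fun i => 3 * (x i - u i))]
        have e2 : (⟨k - 2, by omega⟩ : Fin d) = K2 := by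
          apply Fin.ext; show k - 2 = (K2 : ℕ); omega
        have e1 : (⟨k - 1, by omega⟩ : Fin d) = K1 := by
          apply Fin.ext; show k - 1 = (K1 : ℕ); omega
        rw [e2, e1]
      have hM : 2*(b+1)^(d+2) * (∑ i, x i) = 2*(b+1)^(d+2) * (∑ i, u i) := by
        rw [heq, hsumu]
      -- subcases on x K1
      by_cases hA : x K1 = θ K1
      · -- need x K2 ≤ θ K2
        have hxk2le : x K2 ≤ θ K2 := by
          rcases eq_or_ne x θ with rfl | hne'
          · exact le_refl _
          · obtain ⟨T, hT1, hT2⟩ := feas_witness hx heq hne'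
            have hTk : (T : ℕ) < k := by
              by_contra hc
              push_neg at hc
              have := hag T hc
              omega
            have hTne1 : (T : ℕ) ≠ k - 1 := by
              intro hc
              have : T = K1 := Fin.ext (by omega)
              rw [this] at hT1
              omega
            rcases eq_or_ne T K2 with rfl | hTne2
            · exact le_of_lt hT1
            · have : (T : ℕ) ≠ k - 2 := fun hc => hTne2 (Fin.ext (by omega))
              rw [hT2 K2 (by rw [Fin.lt_def]; omega)]
        omega
      · by_cases hB : x K1 = θ K1 - 1
        · -- x K2 ≤ btil θ (k-1) + 1
          rcases eq_or_lt_of_le (show x K2 ≤ btil θ (k-1) + 1 by omega) with hC | hC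
          · -- x = u : contradiction
            exfalso; apply hne
            have hsd := Finset.sum_sdiff hpairsub (f := x)
            have hzero : ∀ i ∈ (Finset.univ.filter (fun i : Fin d => (i : ℕ) < k)) \
                ({K2, K1} : Finset (Fin d)), x i = 0 := by
              rw [← Finset.sum_eq_zero_iff_of_nonneg (fun i _ => hx.1 i)]
              omega
            funext i
            by_cases hik : (i : ℕ) < k
            · rcases eq_or_ne i K2 with rfl | hiK2
              · omega
              · rcases eq_or_ne i K1 with rfl | hiK1
                · omega
                · have hmem : i ∈ (Finset.univ.filter (fun i : Fin d => (i : ℕ) < k)) \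
                      ({K2, K1} : Finset (Fin d)) := by
                    simp only [Finset.mem_sdiff, Finset.mem_filter, Finset.mem_univ,
                      true_and, Finset.mem_insert, Finset.mem_singleton]
                    exact ⟨hik, fun hc => by rcases hc with rfl | rfl <;> simp at hiK2 hiK1⟩
                  rw [hzero i hmem, hu]
                  simp only [uP]
                  rw [if_neg (fun hc => hiK2 (Fin.ext (by omega))),
                    if_neg (fun hc => hiK1 (Fin.ext (by omega))), if_neg (by omega)]
            · exact hagu i (by omega)
          · omega
        · -- x K1 ≤ θ K1 - 2
          omega
    · -- B2
      push_neg at hag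
      obtain ⟨i0, hi0k, hi0⟩ := hag
      have hxθ : x ≠ θ := fun hc => hi0 (by rw [hc])
      obtain ⟨T, hT1, hT2⟩ := feas_witness hx heq hxθ
      have hTk : k ≤ (T : ℕ) := by
        by_contra hlt'
        push_neg at hlt'
        exact hi0 (hT2 i0 (by rw [Fin.lt_def]; omega))
      have hL1 := L1 b 2 (by omega) (by omega) x u a T
        (by simp only [ha]
            rw [if_neg (by omega), if_neg (by omega), if_pos hTk]
            omega)
        (fun i _ => hbounds i)
        (fun i hi => by
          rw [Fin.lt_def] at hi
          rw [hT2 i (by rw [Fin.lt_def]; omega), hu]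
          simp only [uP]
          rw [if_neg (by omega), if_neg (by omega), if_pos (by omega)])
        (by
          have huT : u T = θ T := by
            rw [hu]; simp only [uP]
            rw [if_neg (by omega), if_neg (by omega), if_pos hTk]
          omega)
        hx.1 (feas_coord_le hx) hunn
      have hM : 2*(b+1)^(d+2) * (∑ i, x i) = 2*(b+1)^(d+2) * (∑ i, u i) := by
        rw [heq, hsumu]
      omega
  · -- sum x < b
    have hL2 := L2 b 2 (by omega) (by omega) x a hx.1 (by omega) hbounds
    have hau : 0 ≤ ∑ i, a i * u i :=
      Finset.sum_nonneg (fun i _ => mul_nonneg (hbounds i).1 (hunn i))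
    have hMu : 2*(b+1)^(d+2) * (∑ i, u i) = 2*(b+1)^(d+2) * b := by rw [hsumu]
    omega
end UExtreme

section Perturb
variable {d : ℕ}

def pert (x : Fin d → ℤ) (P Q : Fin d) : Fin d → ℤ :=
  fun l => x l + (if l = P then 1 else 0) - (if l = Q then 1 else 0)

def pertU (x : Fin d → ℤ) (P : Fin d) : Fin d → ℤ :=
  fun l => x l + (if l = P then 1 else 0)

def pertD (x : Fin d → ℤ) (P : Fin d) : Fin d → ℤ :=
  fun l => x l - (if l = P then 1 else 0)

variable {x : Fin d → ℤ} {P Q : Fin d}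

lemma pert_apply_P (h : P ≠ Q) : pert x P Q P = x P + 1 := by
  simp [pert, h]

lemma pert_apply_Q (h : P ≠ Q) : pert x P Q Q = x Q - 1 := by
  simp [pert, Ne.symm h]

lemma pert_apply {l : Fin d} (hP : l ≠ P) (hQ : l ≠ Q) : pert x P Q l = x l := by
  simp [pert, hP, hQ]

lemma sum_e (P : Fin d) : ∑ l : Fin d, (if l = P then (1:ℤ) else 0) = 1 := by simp

lemma pert_sum : ∑ l, pert x P Q l = ∑ l, x l := by
  unfold pert
  rw [Finset.sum_sub_distrib, Finset.sum_add_distrib, sum_e, sum_e]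
  ring

lemma pert_mid : ∀ l, pert x P Q l + pert x Q P l = 2 * x l := by
  intro l; unfold pert; ring

lemma pert_ne (hPQ : P ≠ Q) : pert x P Q ≠ x := by
  intro hc
  have := congrFun hc P
  rw [pert_apply_P hPQ] at this
  omega

lemma pert_nonneg (hPQ : P ≠ Q) (hx0 : ∀ l, 0 ≤ x l) (hQ1 : 1 ≤ x Q) :
    ∀ l, 0 ≤ pert x P Q l := by
  intro l
  rcases eq_or_ne l Q with rfl | hlQ
  · rw [pert_apply_Q hPQ]; omega
  · rcases eq_or_ne l P with rfl | hlP
    · rw [pert_apply_P hPQ]; exact le_trans (hx0 l) (by omega)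
    · rw [pert_apply hlP hlQ]; exact hx0 l

lemma pertU_apply_P : pertU x P P = x P + 1 := by simp [pertU]
lemma pertU_apply {l : Fin d} (h : l ≠ P) : pertU x P l = x l := by simp [pertU, h]
lemma pertD_apply_P : pertD x P P = x P - 1 := by simp [pertD]
lemma pertD_apply {l : Fin d} (h : l ≠ P) : pertD x P l = x l := by simp [pertD, h]

lemma pertU_sum : ∑ l, pertU x P l = (∑ l, x l) + 1 := by
  unfold pertU; rw [Finset.sum_add_distrib, sum_e]

lemma pertD_sum : ∑ l, pertD x P l = (∑ l, x l) - 1 := by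
  unfold pertD; rw [Finset.sum_sub_distrib, sum_e]

lemma pertUD_mid : ∀ l, pertD x P l + pertU x P l = 2 * x l := by
  intro l; unfold pertU pertD; ring

lemma pertD_ne : pertD x P ≠ x := by
  intro hc
  have := congrFun hc P
  rw [pertD_apply_P] at this
  omega

lemma pertU_nonneg (hx0 : ∀ l, 0 ≤ x l) : ∀ l, 0 ≤ pertU x P l := by
  intro l
  rcases eq_or_ne l P with rfl | h
  · rw [pertU_apply_P]; exact le_trans (hx0 l) (by omega)
  · rw [pertU_apply h]; exact hx0 l

lemma pertD_nonneg (hx0 : ∀ l, 0 ≤ x l) (hP1 : 1 ≤ x P) : ∀ l, 0 ≤ pertD x P l := by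
  intro l
  rcases eq_or_ne l P with rfl | h
  · rw [pertD_apply_P]; omega
  · rw [pertD_apply h]; exact hx0 l

end Perturb

section Classify
variable {d : ℕ} {θ : Fin d → ℤ}

lemma classify (hθ : ∀ i, 1 ≤ θ i) (hd : 3 ≤ d) (x : Fin d → ℤ) (hx : Feas θ x)
    (hext : toR x ∈ (grlexP d θ).extremePoints ℝ) :
    x = 0 ∨ x = θ ∨ x = wP d θ ∨
      (∃ k, 3 ≤ k ∧ k ≤ d ∧ x = uP d θ k) ∨
      (∃ j k, 1 ≤ j ∧ j < k ∧ k ≤ d ∧ x = vP d θ j k) := by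
  set b := bsum θ with hbdef
  have hb : 3 ≤ b := bsum_pos hθ hd
  have hθsum : ∑ i, θ i = b := rfl
  rcases eq_or_lt_of_le (feas_sum_le hx) with heq | hlt
  · -- ∑ x = b
    rcases eq_or_ne x θ with rfl | hneθ
    · exact Or.inr (Or.inl rfl)
    obtain ⟨T, hT1, hT2⟩ := feas_witness hx heq hneθ
    -- partial sum up to T inclusive
    have hlow : ∑ i ∈ Finset.univ.filter (fun i : Fin d => (i : ℕ) < (T:ℕ)+1), x i
        = btil θ ((T:ℕ)+1) := by
      have := partial_sum_agree ((T:ℕ)+1) x θ (by rw [heq, hθsum])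
        (fun i hi => hT2 i (by rw [Fin.lt_def]; omega))
      rw [btil]
      exact this
    have hTmm : T ∈ Finset.univ.filter (fun i : Fin d => (i : ℕ) < (T:ℕ)+1) := by
      simp only [Finset.mem_filter, Finset.mem_univ, true_and]
      omega
    by_cases h2 : ∃ P Q : Fin d, P ≠ Q ∧ (P:ℕ) < (T:ℕ) ∧ (Q:ℕ) < (T:ℕ) ∧ 1 ≤ x P ∧ 1 ≤ x Q
    · -- two supported coordinates below T : not extreme
      exfalso
      obtain ⟨P, Q, hPQ, hPT, hQT, hxP, hxQ⟩ := h2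
      have hfeas : ∀ (R S : Fin d), R ≠ S → (R:ℕ) < (T:ℕ) → (S:ℕ) < (T:ℕ) → 1 ≤ x S →
          Feas θ (pert x R S) := by
        intro R S hRS hRT hST hxS
        refine ⟨pert_nonneg hRS hx.1 hxS, Or.inr ⟨by rw [pert_sum, heq, hθsum], Or.inr ⟨T, ?_, ?_⟩⟩⟩
        · rw [pert_apply (fun hc => by rw [hc] at hRT; omega)
            (fun hc => by rw [hc] at hST; omega)]
          exact hT1
        · intro l hl
          rw [Fin.lt_def] at hl
          rw [pert_apply (fun hc => by rw [hc] at hl; omega)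
            (fun hc => by rw [hc] at hl; omega)]
          exact hT2 l (by rw [Fin.lt_def]; omega)
      exact mid_not_extreme x (pert x P Q) (pert x Q P)
        (hfeas P Q hPQ hPT hQT hxQ) (hfeas Q P (Ne.symm hPQ) hQT hPT hxP)
        (pert_ne hPQ) pert_mid hext
    · by_cases h1 : ∃ P : Fin d, (P:ℕ) < (T:ℕ) ∧ 1 ≤ x P
      · obtain ⟨P, hPT, hxP⟩ := h1
        have hPneT : P ≠ T := fun hc => by rw [hc] at hPT; omega
        have huniq : ∀ Q : Fin d, (Q:ℕ) < (T:ℕ) → Q ≠ P → x Q = 0 := by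
          intro Q hQT hQP
          by_contra hc
          have : 1 ≤ x Q := lt_of_le_of_ne (hx.1 Q) (Ne.symm hc)
          exact h2 ⟨Q, P, hQP, hQT, hPT, this, hxP⟩
        -- x P + x T = btil θ (T+1)
        have hpairsub : ({P, T} : Finset (Fin d)) ⊆
            Finset.univ.filter (fun i : Fin d => (i : ℕ) < (T:ℕ)+1) := by
          intro i hi
          simp only [Finset.mem_insert, Finset.mem_singleton] at hi
          simp only [Finset.mem_filter, Finset.mem_univ, true_and]
          rcases hi with rfl | rfl <;> omega
        have hsd := Finset.sum_sdiff hpairsub (f := x)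
        have hpairsum : ∑ i ∈ ({P, T} : Finset (Fin d)), x i = x P + x T :=
          Finset.sum_pair hPneT
        have hrest : ∑ i ∈ (Finset.univ.filter (fun i : Fin d => (i : ℕ) < (T:ℕ)+1)) \
            ({P, T} : Finset (Fin d)), x i = 0 := by
          apply Finset.sum_eq_zero
          intro i hi
          simp only [Finset.mem_sdiff, Finset.mem_filter, Finset.mem_univ, true_and,
            Finset.mem_insert, Finset.mem_singleton, not_or] at hi
          obtain ⟨hik, hiP, hiT⟩ := hi
          exact huniq i (by
            have : (i:ℕ) ≠ (T:ℕ) := fun hc => hiT (Fin.ext hc)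
            omega) hiP
        have hPT_sum : x P + x T = btil θ ((T:ℕ)+1) := by omega
        have hbtT : btil θ ((T:ℕ)+1) = btil θ (T:ℕ) + θ T :=
          btil_succ' T rfl T.isLt
        have hbtTge : ((T:ℕ) : ℤ) ≤ btil θ (T:ℕ) := btil_ge hθ (le_of_lt T.isLt)
        rcases eq_or_ne (x T) 0 with hxT0 | hxTne
        · -- x = vP (P+1) (T+1)
          right; right; right; right
          refine ⟨(P:ℕ)+1, (T:ℕ)+1, by omega, by omega, by omega, ?_⟩
          funext l
          simp only [vP]
          by_cases hlP : l = P
          · subst hlP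
            rw [if_pos (by omega)]
            omega
          · rw [if_neg (fun hc => hlP (Fin.ext (by omega)))]
            by_cases hlT : (T:ℕ)+1 ≤ (l:ℕ)
            · rw [if_pos hlT]
              exact hT2 l (by rw [Fin.lt_def]; omega)
            · rw [if_neg hlT]
              rcases eq_or_ne l T with rfl | hlT'
              · exact hxT0
              · exact huniq l (by
                  have : (l:ℕ) ≠ (T:ℕ) := fun hc => hlT' (Fin.ext hc)
                  omega) hlP
        · have hxT1 : 1 ≤ x T := lt_of_le_of_ne (hx.1 T) (Ne.symm hxTne)
          have hθT2 : 2 ≤ θ T := by omega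
          -- the downward perturbation x + e_P - e_T is always feasible here
          have hfeasPT : Feas θ (pert x P T) := by
            refine ⟨pert_nonneg hPneT hx.1 hxT1,
              Or.inr ⟨by rw [pert_sum, heq, hθsum], Or.inr ⟨T, ?_, ?_⟩⟩⟩
            · rw [pert_apply_Q hPneT]; omega
            · intro l hl
              rw [Fin.lt_def] at hl
              rw [pert_apply (fun hc => by rw [hc] at hl; omega)
                (fun hc => by rw [hc] at hl; omega)]
              exact hT2 l (by rw [Fin.lt_def]; omega)
          rcases eq_or_ne (x T) (θ T - 1) with hxTtop | hxTmid
          · -- x T = θ T - 1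
            by_cases hPtop : (P:ℕ) = (T:ℕ) - 1 ∧ 2 ≤ (T:ℕ)
            · -- x = uP (T+1)
              right; right; right; left
              refine ⟨(T:ℕ)+1, by omega, by omega, ?_⟩
              funext l
              simp only [uP]
              by_cases hlP : l = P
              · subst hlP
                rw [if_pos (by omega)]
                have : (T:ℕ)+1-1 = (T:ℕ) := by omega
                rw [this]
                omega
              · rw [if_neg (fun hc => hlP (Fin.ext (by omega)))]
                by_cases hlT : l = T
                · subst hlT
                  rw [if_pos (by omega)]
                  omega
                · rw [if_neg (fun hc => hlT (Fin.ext (by omega)))]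
                  by_cases hlge : (T:ℕ)+1 ≤ (l:ℕ)
                  · rw [if_pos hlge]
                    exact hT2 l (by rw [Fin.lt_def]; omega)
                  · rw [if_neg hlge]
                    exact huniq l (by
                      have : (l:ℕ) ≠ (T:ℕ) := fun hc => hlT (Fin.ext hc)
                      omega) hlP
            · -- not a vertex: perturb
              exfalso
              have hzfeas : Feas θ (pert x T P) := by
                refine ⟨pert_nonneg (Ne.symm hPneT) hx.1 hxP, Or.inr
                  ⟨by rw [pert_sum, heq, hθsum], ?_⟩⟩
                rcases Nat.lt_or_ge 1 (T:ℕ) with hT2' | hT1'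
                · -- T ≥ 2 and P < T - 1
                  have hPT1 : (P:ℕ) < (T:ℕ) - 1 := by
                    rcases Nat.lt_or_ge (P:ℕ) ((T:ℕ)-1) with h' | h'
                    · exact h'
                    · exact absurd ⟨by omega, by omega⟩ hPtop
                  obtain ⟨T', hT'⟩ : ∃ T' : Fin d, (T':ℕ) = (T:ℕ)-1 :=
                    ⟨⟨(T:ℕ)-1, by omega⟩, rfl⟩
                  refine Or.inr ⟨T', ?_, ?_⟩
                  · rw [pert_apply (fun hc => by rw [hc] at hT'; omega)
                      (fun hc => by rw [hc] at hT'; omega)]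
                    rw [huniq T' (by omega) (fun hc => by rw [hc] at hT'; omega)]
                    exact hθ T'
                  · intro l hl
                    rw [Fin.lt_def, hT'] at hl
                    rcases eq_or_ne l T with rfl | hlT
                    · rw [pert_apply_P (Ne.symm hPneT)]; omega
                    · rw [pert_apply hlT (fun hc => by rw [hc] at hl; omega)]
                      exact hT2 l (by rw [Fin.lt_def]; omega)
                · -- T = 1, P = 0 : z = θ
                  have hTval : (T:ℕ) = 1 := by omega
                  have hPval : (P:ℕ) = 0 := by omega
                  have hzθ : pert x T P = θ := by
                    funext l
                    rcases eq_or_ne l T with hlT | hlT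
                    · rw [hlT, pert_apply_P (Ne.symm hPneT)]; omega
                    · rcases eq_or_ne l P with hlP | hlP
                      · rw [hlP, pert_apply_Q (Ne.symm hPneT)]
                        have hbt1' : btil θ 1 = btil θ 0 + θ P := by
                          have := btil_succ' (θ := θ) P hPval (by omega)
                          simpa using this
                        rw [btil_zero] at hbt1'
                        have hbtsucc : btil θ ((T:ℕ)+1) = btil θ (T:ℕ) + θ T :=
                          btil_succ' T rfl T.isLt
                        have hbtT1 : btil θ (T:ℕ) = θ P := by rw [hTval]; omega
                        omega
                      · rw [pert_apply hlT hlP]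
                        have h0 : (l:ℕ) ≠ 0 := fun hc => hlP (Fin.ext (by omega))
                        have h1' : (T:ℕ) < (l:ℕ) := by omega
                        exact hT2 l (by rw [Fin.lt_def]; omega)
                  rw [hzθ]
                  exact Or.inl rfl
              exact mid_not_extreme x (pert x P T) (pert x T P)
                hfeasPT hzfeas (pert_ne hPneT) pert_mid hext
          · -- 1 ≤ x T ≤ θ T - 2 : perturb ± (e_P - e_T)
            exfalso
            have hzfeas : Feas θ (pert x T P) := by
              refine ⟨pert_nonneg (Ne.symm hPneT) hx.1 hxP,
                Or.inr ⟨by rw [pert_sum, heq, hθsum], Or.inr ⟨T, ?_, ?_⟩⟩⟩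
              · rw [pert_apply_P (Ne.symm hPneT)]; omega
              · intro l hl
                rw [Fin.lt_def] at hl
                rw [pert_apply (fun hc => by rw [hc] at hl; omega)
                  (fun hc => by rw [hc] at hl; omega)]
                exact hT2 l (by rw [Fin.lt_def]; omega)
            exact mid_not_extreme x (pert x P T) (pert x T P)
              hfeasPT hzfeas (pert_ne hPneT) pert_mid hext
      · -- no support below T : contradiction
        exfalso
        push_neg at h1
        have hrest : ∑ i ∈ (Finset.univ.filter
            (fun i : Fin d => (i : ℕ) < (T:ℕ)+1)).erase T, x i = 0 := by
          apply Finset.sum_eq_zero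
          intro i hi
          obtain ⟨hiT, himem⟩ := Finset.mem_erase.1 hi
          simp only [Finset.mem_filter, Finset.mem_univ, true_and] at himem
          have : (i:ℕ) < (T:ℕ) := by
            have : (i:ℕ) ≠ (T:ℕ) := fun hc => hiT (Fin.ext hc)
            omega
          have := h1 i this
          have := hx.1 i
          omega
        have hadd := Finset.add_sum_erase _ x hTmm
        have hbtT : btil θ ((T:ℕ)+1) = btil θ (T:ℕ) + θ T :=
          btil_succ' T rfl T.isLt
        have hbtTge : ((T:ℕ) : ℤ) ≤ btil θ (T:ℕ) := btil_ge hθ (le_of_lt T.isLt)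
        have hTge0 : (0:ℤ) ≤ ((T:ℕ) : ℤ) := by positivity
        omega
  · -- ∑ x < b
    rcases eq_or_ne x 0 with rfl | hne0
    · exact Or.inl rfl
    obtain ⟨i0, hi0⟩ := Function.ne_iff.mp hne0
    have hxi0 : 1 ≤ x i0 := lt_of_le_of_ne (hx.1 i0) (Ne.symm hi0)
    rcases eq_or_lt_of_le (show ∑ i, x i ≤ b - 1 by omega) with heq1 | hlt1
    · -- ∑ x = b - 1
      by_cases h2 : ∃ i1, i1 ≠ i0 ∧ 1 ≤ x i1
      · exfalso
        obtain ⟨i1, hi1ne, hxi1⟩ := h2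
        have hy : Feas θ (pert x i0 i1) :=
          ⟨pert_nonneg (Ne.symm hi1ne) hx.1 hxi1, Or.inl (by rw [pert_sum, heq1, hθsum]; omega)⟩
        have hz : Feas θ (pert x i1 i0) :=
          ⟨pert_nonneg hi1ne hx.1 hxi0, Or.inl (by rw [pert_sum, heq1, hθsum]; omega)⟩
        exact mid_not_extreme x (pert x i0 i1) (pert x i1 i0) hy hz
          (pert_ne (Ne.symm hi1ne)) pert_mid hext
      · -- x = (b-1) e_{i0}
        push_neg at h2
        have huniq : ∀ l, l ≠ i0 → x l = 0 := by
          intro l hl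
          have := h2 l hl
          have := hx.1 l
          omega
        have hxi0b : x i0 = b - 1 := by
          have hadd := Finset.add_sum_erase _ x (Finset.mem_univ i0)
          have hrest : ∑ i ∈ Finset.univ.erase i0, x i = 0 :=
            Finset.sum_eq_zero (fun i hi => huniq i (Finset.mem_erase.1 hi).1)
          omega
        by_cases hlast : (i0:ℕ) = d - 1
        · -- x = wP
          right; right; left
          funext l
          simp only [wP]
          rcases eq_or_ne l i0 with rfl | hl
          · rw [if_pos hlast]; omega
          · rw [if_neg (fun hc => hl (Fin.ext (by omega))), huniq l hl]
        · -- perturb ± e_{i0}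
          exfalso
          have hy : Feas θ (pertD x i0) :=
            ⟨pertD_nonneg hx.1 hxi0, Or.inl (by rw [pertD_sum, heq1, hθsum]; omega)⟩
          obtain ⟨L, hL⟩ : ∃ L : Fin d, (L:ℕ) = d - 1 := ⟨⟨d-1, by omega⟩, rfl⟩
          have hz : Feas θ (pertU x i0) := by
            refine ⟨pertU_nonneg hx.1, Or.inr ⟨by rw [pertU_sum, heq1, hθsum]; omega,
              Or.inr ⟨L, ?_, ?_⟩⟩⟩
            · rw [pertU_apply (fun hc => by rw [hc] at hL; omega),
                huniq L (fun hc => by rw [hc] at hL; omega)]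
              exact hθ L
            · intro l hl
              rw [Fin.lt_def, hL] at hl
              have := l.isLt
              omega
          exact mid_not_extreme x (pertD x i0) (pertU x i0) hy hz pertD_ne
            pertUD_mid hext
    · -- ∑ x ≤ b - 2 : perturb ± e_{i0}
      exfalso
      have hy : Feas θ (pertD x i0) :=
        ⟨pertD_nonneg hx.1 hxi0, Or.inl (by rw [pertD_sum, hθsum]; omega)⟩
      have hz : Feas θ (pertU x i0) :=
        ⟨pertU_nonneg hx.1, Or.inl (by rw [pertU_sum, hθsum]; omega)⟩
      exact mid_not_extreme x (pertD x i0) (pertU x i0) hy hz pertD_ne pertUD_mid hext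

end Classify

lemma toR_zero {d : ℕ} : toR (0 : Fin d → ℤ) = 0 := by
  funext i; simp [toR]


/-- The vertices of the grlex polytope `P` are exactly `0`, `θ`,
`w = (b-1)e_d`, the points `u^k` for `3 ≤ k ≤ d`, and the points `v^{j,k}` for
`1 ≤ j < k ≤ d`. -/
theorem grlexP_extremePoints (d : ℕ) (hd : 3 ≤ d) (θ : Fin d → ℤ) (hθ : ∀ i, 1 ≤ θ i) :
    (grlexP d θ).extremePoints ℝ =
      {(0 : Fin d → ℝ), toR θ, toR (wP d θ)} ∪
        {p | ∃ k : ℕ, 3 ≤ k ∧ k ≤ d ∧ p = toR (uP d θ k)} ∪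
        {p | ∃ j k : ℕ, 1 ≤ j ∧ j < k ∧ k ≤ d ∧ p = toR (vP d θ j k)} := by
  apply Set.ext
  intro p
  constructor
  · intro hp
    have hp' : p ∈ (convexHull ℝ
        {q | ∃ x : Fin d → ℤ, (∀ i, 0 ≤ x i) ∧ grlexLe x θ ∧ q = toR x}).extremePoints ℝ := hp
    have hmem := extremePoints_convexHull_subset hp'
    obtain ⟨x, hx0, hxg, rfl⟩ := hmem
    rcases classify hθ hd x ⟨hx0, hxg⟩ hp with h | h | h | h | h
    · subst h
      exact Or.inl (Or.inl (Or.inl toR_zero))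
    · subst h
      exact Or.inl (Or.inl (Or.inr (Or.inl rfl)))
    · subst h
      exact Or.inl (Or.inl (Or.inr (Or.inr rfl)))
    · obtain ⟨k, hk3, hk, hxe⟩ := h
      subst hxe
      exact Or.inl (Or.inr ⟨k, hk3, hk, rfl⟩)
    · obtain ⟨j, k, hj, hjk, hk, hxe⟩ := h
      subst hxe
      exact Or.inr ⟨j, k, hj, hjk, hk, rfl⟩
  · intro hp
    rcases hp with (h | h) | h
    · rcases h with h | h | h
      · rw [h, ← toR_zero]
        exact zero_extreme hθ hd
      · rw [h]
        exact theta_extreme hθ hd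
      · rw [h]
        exact w_extreme hθ hd
    · obtain ⟨k, hk3, hk, he⟩ := h
      rw [he]
      exact u_extreme hθ hd hk3 hk
    · obtain ⟨j, k, hj, hjk, hk, he⟩ := h
      rw [he]
      exact v_extreme hθ hd hj hjk hk
end

section
/- Suppose cx ≤ c_0 is valid for the grlex polytope P and F = P ∩ {x : cx = c_0} is a face of P. If F is not contained in the hyperplane {x_{i+1} = 0} for some 1 ≤ i ≤ d-1, then c_{i+1} ≥ max{c_i, 0}. Consequently, for any nontrivial facet (one not given by a coordinate plane), 0 ≤ c_1 ≤ c_2 ≤ ... ≤ c_d. -/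
open Set Finset

section Aux

variable {d : ℕ}

/-- Every point of the grlex polytope has nonnegative coordinates. -/
lemma grlexP_nonneg (θ : Fin d → ℤ) : ∀ z ∈ grlexP d θ, ∀ i, 0 ≤ z i := by
  intro z hz
  have hsub : grlexP d θ ⊆ {x : Fin d → ℝ | ∀ i, 0 ≤ x i} := by
    apply convexHull_min
    · rintro p ⟨x, hx, -, rfl⟩ i
      simp only [toR]
      exact_mod_cast hx i
    · have : {x : Fin d → ℝ | ∀ i, 0 ≤ x i} = Set.pi Set.univ (fun _ => Set.Ici 0) := by
        ext x; simp [Set.mem_pi, Pi.le_def]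
      rw [this]
      exact convex_pi fun i _ => convex_Ici 0
  exact hsub hz

lemma sum_toR_add (c : Fin d → ℝ) (x e : Fin d → ℤ) :
    ∑ i, c i * toR (fun k => x k + e k) i = (∑ i, c i * toR x i) + ∑ i, c i * (e i : ℝ) := by
  rw [← Finset.sum_add_distrib]
  refine Finset.sum_congr rfl fun i _ => ?_
  simp [toR]
  ring

/-- Extraction: from a point of the polytope maximizing `c` with positive `j`-th
coordinate, extract an integer generator maximizing `c` with positive `j`-th coordinate. -/
lemma extract_vertex (θ : Fin d → ℤ) (c : Fin d → ℝ) (c0 : ℝ)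
    (hvalid : ∀ x ∈ grlexP d θ, ∑ i, c i * x i ≤ c0)
    (z : Fin d → ℝ) (hz : z ∈ grlexP d θ) (hzc : ∑ i, c i * z i = c0)
    (j : Fin d) (hzj : z j ≠ 0) :
    ∃ x : Fin d → ℤ, (∀ i, 0 ≤ x i) ∧ grlexLe x θ ∧
      (∑ i, c i * toR x i) = c0 ∧ 1 ≤ x j := by
  have hzP := hz
  rw [grlexP, _root_.convexHull_eq] at hz
  obtain ⟨ι, t, w, p, hw0, hw1, hp, hcm⟩ := hz
  rw [Finset.centerMass_eq_of_sum_1 _ _ hw1] at hcm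
  have hpP : ∀ k ∈ t, p k ∈ grlexP d θ := fun k hk =>
    subset_convexHull ℝ _ (hp k hk)
  -- z coordinates and c-value as sums
  have hzj' : z j = ∑ k ∈ t, w k * p k j := by
    rw [← hcm]
    simp [Finset.sum_apply]
  have hzi : ∀ i, z i = ∑ k ∈ t, w k * p k i := by
    intro i; rw [← hcm]; simp [Finset.sum_apply]
  have hLz : ∑ k ∈ t, w k * (∑ i, c i * p k i) = c0 := by
    rw [← hzc]
    simp_rw [Finset.mul_sum, hzi, Finset.mul_sum]
    rw [Finset.sum_comm]
    exact Finset.sum_congr rfl fun k _ => Finset.sum_congr rfl fun i _ => by ring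
  -- each positive-weight point maximizes c
  have hterm : ∀ k ∈ t, w k * (c0 - ∑ i, c i * p k i) = 0 := by
    have hsum0 : ∑ k ∈ t, w k * (c0 - ∑ i, c i * p k i) = 0 := by
      have : ∑ k ∈ t, w k * (c0 - ∑ i, c i * p k i)
          = (∑ k ∈ t, w k) * c0 - ∑ k ∈ t, w k * (∑ i, c i * p k i) := by
        rw [Finset.sum_mul, ← Finset.sum_sub_distrib]
        exact Finset.sum_congr rfl fun k _ => by ring
      rw [this, hw1, hLz]; ring
    have hnn : ∀ k ∈ t, 0 ≤ w k * (c0 - ∑ i, c i * p k i) := fun k hk =>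
      mul_nonneg (hw0 k hk) (by linarith [hvalid (p k) (hpP k hk)])
    exact (Finset.sum_eq_zero_iff_of_nonneg hnn).1 hsum0
  -- find a point with positive weight and positive j-coordinate
  by_contra hcon
  push_neg at hcon
  apply hzj
  rw [hzj']
  apply Finset.sum_eq_zero
  intro k hk
  rcases eq_or_ne (w k) 0 with hw | hw
  · rw [hw, zero_mul]
  · have hLk : ∑ i, c i * p k i = c0 := by
      have := hterm k hk
      rcases mul_eq_zero.1 this with h | h
      · exact absurd h hw
      · linarith
    obtain ⟨x, hx0, hxθ, hpk⟩ := hp k hk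
    have h1 := hcon x hx0 hxθ (by rw [← hpk]; exact hLk)
    have h2 := hx0 j
    have hxj : x j = 0 := by omega
    rw [hpk]
    simp [toR, hxj]

/-- Decreasing a positive coordinate of a generator yields a generator. -/
lemma down_mem (θ : Fin d → ℤ) (x : Fin d → ℤ) (hx0 : ∀ i, 0 ≤ x i)
    (hxθ : grlexLe x θ) (j : Fin d) (hj : 1 ≤ x j) :
    (∀ i, 0 ≤ x i + (- if i = j then 1 else 0)) ∧
      grlexLe (fun k => x k + (- if k = j then 1 else 0)) θ := by
  constructor
  · intro i
    by_cases h : i = j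
    · subst h; simpa using hj
    · simpa [h] using hx0 i
  · left
    have hs : ∑ i, (x i + (- if i = j then (1:ℤ) else 0)) = (∑ i, x i) - 1 := by
      rw [Finset.sum_add_distrib]
      simp [sub_eq_add_neg]
    rw [hs]
    rcases hxθ with h | ⟨h, -⟩ <;> omega

/-- Moving a unit of mass from coordinate `i1` to an earlier coordinate `i0`
yields a generator. -/
lemma swap_mem (θ : Fin d → ℤ) (x : Fin d → ℤ) (hx0 : ∀ i, 0 ≤ x i)
    (hxθ : grlexLe x θ) (i0 i1 : Fin d) (h01 : i0 < i1) (hj : 1 ≤ x i1) :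
    (∀ i, 0 ≤ x i + ((if i = i0 then 1 else 0) - if i = i1 then 1 else 0)) ∧
      grlexLe (fun k => x k + ((if k = i0 then 1 else 0) - if k = i1 then 1 else 0)) θ := by
  have hne : i0 ≠ i1 := ne_of_lt h01
  constructor
  · intro i
    have hxi := hx0 i
    by_cases h1 : i = i1
    · subst h1; simp [hne.symm]; omega
    · by_cases h0 : i = i0
      · simp [h0, h1] at hxi ⊢; omega
      · simpa [h0, h1] using hx0 i
  · have hs : ∑ i, (x i + ((if i = i0 then (1:ℤ) else 0) - if i = i1 then 1 else 0))
        = ∑ i, x i := by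
      rw [Finset.sum_add_distrib, Finset.sum_sub_distrib]
      simp
    rcases hxθ with h | ⟨h, hlex⟩
    · left; rw [hs]; omega
    · right
      refine ⟨by rw [hs]; omega, ?_⟩
      -- lexLe of the new point
      right
      -- we use witness `i1` or a larger witness from hlex
      rcases hlex with rfl | ⟨i', hi'lt, hi'eq⟩
      · exact ⟨i1, by simp [hne.symm] <;> omega,
          fun k hk => by
            have hk0 : k ≠ i0 := ne_of_gt (lt_trans h01 hk)
            have hk1 : k ≠ i1 := ne_of_gt hk
            simp [hk0, hk1]⟩
      · rcases lt_or_ge i1 i' with hlt | hle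
        · refine ⟨i', ?_, fun k hk => ?_⟩
          · have h0 : i' ≠ i0 := ne_of_gt (lt_trans h01 hlt)
            have h1 : i' ≠ i1 := ne_of_gt hlt
            simpa [h0, h1] using hi'lt
          · have hk0 : k ≠ i0 := ne_of_gt (lt_trans h01 (lt_trans hlt hk))
            have hk1 : k ≠ i1 := ne_of_gt (lt_trans hlt hk)
            simp only [hk0, hk1, if_false]
            rw [hi'eq k hk]
            ring
        · refine ⟨i1, ?_, fun k hk => ?_⟩
          · have hx1θ : x i1 ≤ θ i1 := by
              rcases lt_or_eq_of_le hle with hlt | heq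
              · exact le_of_eq (hi'eq i1 hlt)
              · subst heq; exact le_of_lt hi'lt
            simp [hne.symm] <;> omega
          · have hk0 : k ≠ i0 := ne_of_gt (lt_trans h01 hk)
            have hk1 : k ≠ i1 := ne_of_gt hk
            simp only [hk0, hk1, if_false]
            rw [hi'eq k (lt_of_le_of_lt hle hk)]
            ring

/-- Key lemma: if the face contains a point with `z j ≠ 0` then `0 ≤ c j` and
`c i ≤ c j` for all `i < j`. -/
lemma key_lemma (θ : Fin d → ℤ) (c : Fin d → ℝ) (c0 : ℝ)
    (hvalid : ∀ x ∈ grlexP d θ, ∑ i, c i * x i ≤ c0)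
    (z : Fin d → ℝ) (hz : z ∈ grlexP d θ) (hzc : ∑ i, c i * z i = c0)
    (j : Fin d) (hzj : z j ≠ 0) :
    0 ≤ c j ∧ ∀ i : Fin d, i < j → c i ≤ c j := by
  obtain ⟨x, hx0, hxθ, hxc, hxj⟩ := extract_vertex θ c c0 hvalid z hz hzc j hzj
  constructor
  · -- down move
    obtain ⟨hy0, hyθ⟩ := down_mem θ x hx0 hxθ j hxj
    set e : Fin d → ℤ := fun k => - if k = j then 1 else 0 with he
    have hmem : toR (fun k => x k + e k) ∈ grlexP d θ :=
      subset_convexHull ℝ _ ⟨fun k => x k + e k, hy0, hyθ, rfl⟩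
    have := hvalid _ hmem
    rw [sum_toR_add c x e, hxc] at this
    have hes : ∑ i, c i * (e i : ℝ) = - c j := by
      have hpt : ∀ i, c i * (e i : ℝ) = - if i = j then c i else 0 := by
        intro i
        simp only [he]
        by_cases h : i = j <;> simp [h]
      simp [hpt]
    rw [hes] at this
    linarith
  · intro i hij
    obtain ⟨hy0, hyθ⟩ := swap_mem θ x hx0 hxθ i j hij hxj
    set e : Fin d → ℤ := fun k => (if k = i then 1 else 0) - if k = j then 1 else 0 with he
    have hmem : toR (fun k => x k + e k) ∈ grlexP d θ :=
      subset_convexHull ℝ _ ⟨fun k => x k + e k, hy0, hyθ, rfl⟩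
    have := hvalid _ hmem
    rw [sum_toR_add c x e, hxc] at this
    have hij' : i ≠ j := ne_of_lt hij
    have hes : ∑ k, c k * (e k : ℝ) = c i - c j := by
      have hpt : ∀ k, c k * (e k : ℝ)
          = (if k = i then c k else 0) - (if k = j then c k else 0) := by
        intro k
        simp only [he]
        push_cast
        rw [mul_sub, mul_ite, mul_ite]
        simp
      simp only [hpt, Finset.sum_sub_distrib, Finset.sum_ite_eq', Finset.mem_univ, if_true]
    rw [hes] at this
    linarith

end Aux

/-- monotonicity of coefficients of supporting hyperplanes of the grlex
polytope `P`.  (Paper coordinates are 1-indexed; here index `i : ℕ` with `i + 1 < d`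
corresponds to the paper's pair of coordinates `(i+1, i+2)`.)  If the face
`F = P ∩ {x : cx = c₀}` is not contained in `{x_{i+1} = 0}` (0-indexed), then
`c_{i+1} ≥ max{c_i, 0}`; consequently the coefficients of a nontrivial facet satisfy
`0 ≤ c_1 ≤ c_2 ≤ … ≤ c_d`. -/
theorem grlexP_monotone_coefficients (d : ℕ) (hd : 3 ≤ d) (θ : Fin d → ℤ)
    (hθ : ∀ i, 1 ≤ θ i) (c : Fin d → ℝ) (c0 : ℝ)
    (hvalid : ∀ x ∈ grlexP d θ, ∑ i, c i * x i ≤ c0)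
    (F : Set (Fin d → ℝ)) (hF : F = grlexP d θ ∩ {x | ∑ i, c i * x i = c0}) :
    (∀ i : ℕ, ∀ hi : i + 1 < d,
      ¬ F ⊆ {x | x ⟨i + 1, hi⟩ = 0} →
        max (c ⟨i, by omega⟩) 0 ≤ c ⟨i + 1, hi⟩) ∧
    ((IsFacet (grlexP d θ) F ∧ ∀ i : Fin d, ¬ F ⊆ {x | x i = 0}) →
      ∀ i j : Fin d, i ≤ j → 0 ≤ c i ∧ c i ≤ c j) := by
  have hmax : ∀ j : Fin d, (¬ F ⊆ {x | x j = 0}) →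
      0 ≤ c j ∧ ∀ i : Fin d, i < j → c i ≤ c j := by
    intro j hns
    rw [Set.not_subset] at hns
    obtain ⟨z, hzF, hzj⟩ := hns
    rw [hF] at hzF
    exact key_lemma θ c c0 hvalid z hzF.1 hzF.2 j hzj
  constructor
  · intro i hi hns
    obtain ⟨h0, hmono⟩ := hmax ⟨i + 1, hi⟩ hns
    exact max_le (hmono ⟨i, by omega⟩ (by simp [Fin.lt_def])) h0
  · rintro ⟨-, hnt⟩ i j hij
    refine ⟨(hmax i (hnt i)).1, ?_⟩
    rcases eq_or_lt_of_le hij with rfl | hlt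
    · exact le_refl _
    · exact (hmax j (hnt j)).2 i hlt
end
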